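/- arXiv:1406.0052 — 11 statements merged into one kernel-verified Lean document; each statement's English description precedes it below -/
import Mathlib

section
/- Let E be a real inner product space, let A and B be linear subspaces of E, and let ρ be a real number with 0 ≤ ρ < 1. Then the following two conditions are equivalent: (i) ⟨a, b⟩ ≤ ρ‖a‖‖b‖ for all a ∈ A and b ∈ B; (ii) ‖a + b‖² ≥ (1 − ρ²)‖a‖² for all a ∈ A and b ∈ B. -/
open RealInnerProductSpace

/-- Equivalent form of the minimal-angle separation assumption (Remark 2):
for linear subspaces `A`, `B` of a real inner product space and `0 ≤ ρ < 1`,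
the angle condition `⟪a, b⟫ ≤ ρ‖a‖‖b‖` is equivalent to
`‖a + b‖² ≥ (1 − ρ²)‖a‖²`. -/
theorem norms_of_projections_remark2
    {E : Type*} [NormedAddCommGroup E] [InnerProductSpace ℝ E]
    (A B : Submodule ℝ E) (ρ : ℝ) (hρ0 : 0 ≤ ρ) (hρ1 : ρ < 1) :
    (∀ a ∈ A, ∀ b ∈ B, ⟪a, b⟫ ≤ ρ * ‖a‖ * ‖b‖) ↔
    (∀ a ∈ A, ∀ b ∈ B, ‖a + b‖ ^ 2 ≥ (1 - ρ ^ 2) * ‖a‖ ^ 2) := by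
  constructor
  · intro h a ha b hb
    have h1 := h (-a) (A.neg_mem ha) b hb
    rw [inner_neg_left, norm_neg] at h1
    have hexp : ‖a + b‖ ^ 2 = ‖a‖ ^ 2 + 2 * ⟪a, b⟫ + ‖b‖ ^ 2 := norm_add_sq_real a b
    nlinarith [sq_nonneg (‖b‖ - ρ * ‖a‖)]
  · intro h a ha b hb
    rcases eq_or_ne b 0 with rfl | hb0
    · simp [inner_zero_right]
    · have hbn : (0:ℝ) < ‖b‖ := norm_pos_iff.mpr hb0
      set t : ℝ := -⟪a, b⟫ / ‖b‖ ^ 2 with ht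
      have h1 := h a ha (t • b) (B.smul_mem t hb)
      have hexp : ‖a + t • b‖ ^ 2 = ‖a‖ ^ 2 + 2 * (t * ⟪a, b⟫) + (|t| * ‖b‖) ^ 2 := by
        rw [norm_add_sq_real, real_inner_smul_right, norm_smul, Real.norm_eq_abs]
      rw [hexp] at h1
      have habs : (|t| * ‖b‖) ^ 2 = t ^ 2 * ‖b‖ ^ 2 := by
        rw [mul_pow, sq_abs]
      rw [habs] at h1
      -- h1 : ‖a‖^2 + 2*(t*⟪a,b⟫) + t^2*‖b‖^2 ≥ (1-ρ^2)*‖a‖^2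
      have key : ⟪a, b⟫ ^ 2 ≤ ρ ^ 2 * ‖a‖ ^ 2 * ‖b‖ ^ 2 := by
        have ht2 : t * ‖b‖ ^ 2 = -⟪a, b⟫ := by
          rw [ht]; exact div_mul_cancel₀ _ (pow_ne_zero 2 hbn.ne')
        nlinarith [sq_nonneg t, sq_nonneg ‖b‖]
      nlinarith [sq_nonneg (ρ * ‖a‖ * ‖b‖ - ⟪a, b⟫), mul_nonneg (mul_nonneg hρ0 (norm_nonneg a)) (norm_nonneg b)]
end

section
/- Let E be a real inner product space, let q and q* be positive integers, let H₁, …, H_q be linear subspaces of E, and for J ⊆ {1,…,q} write H_J = ∑_{j∈J} H_j. Assume there is ρ ∈ [0,1) such that for all disjoint subsets J₁, J₂ ⊆ {1,…,q} with |J₁|, |J₂| ≤ q* and all h₁ ∈ H_{J₁}, h₂ ∈ H_{J₂} one has ⟨h₁, h₂⟩ ≤ ρ‖h₁‖‖h₂‖. Let J₀ ⊆ {1,…,q} with |J₀| ≤ q*, and let f_j ∈ H_j with f_j ≠ 0 for every j ∈ J₀. Then for every nonempty subset J ⊆ J₀ one has ∑_{j∈J} f_j ≠ 0; in particular the minimum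 κ = min_{∅ ≠ J ⊆ J₀} ‖∑_{j∈J} f_j‖² is strictly positive. -/
open RealInnerProductSpace

/-- Lemma 2 of the paper: under the minimal-angle separation assumption,
for `J₀` of cardinality at most `q*` and nonzero components `f_j ∈ H_j` (`j ∈ J₀`),
every partial sum `∑_{j∈J} f_j` over a nonempty `J ⊆ J₀` is nonzero; in particular
the minimum `κ = min_{∅≠J⊆J₀} ‖∑_{j∈J} f_j‖²` is strictly positive. -/
theorem norms_of_projections_lemma2
    {E : Type*} [NormedAddCommGroup E] [InnerProductSpace ℝ E]
    (q qstar : ℕ) (hq : 0 < q) (hqstar : 0 < qstar)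
    (H : Fin q → Submodule ℝ E)
    (ρ : ℝ) (hρ0 : 0 ≤ ρ) (hρ1 : ρ < 1)
    (hangle : ∀ J₁ J₂ : Finset (Fin q), Disjoint J₁ J₂ →
      J₁.card ≤ qstar → J₂.card ≤ qstar →
      ∀ h₁ ∈ J₁.sup H, ∀ h₂ ∈ J₂.sup H, ⟪h₁, h₂⟫ ≤ ρ * ‖h₁‖ * ‖h₂‖)
    (J₀ : Finset (Fin q)) (hJ₀ : J₀.card ≤ qstar)
    (f : Fin q → E) (hfmem : ∀ j ∈ J₀, f j ∈ H j) (hfne : ∀ j ∈ J₀, f j ≠ 0) :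
    (∀ J ⊆ J₀, J.Nonempty → ∑ j ∈ J, f j ≠ 0) ∧
    ∃ κ : ℝ, 0 < κ ∧ ∀ J ⊆ J₀, J.Nonempty → κ ≤ ‖∑ j ∈ J, f j‖ ^ 2 := by
  have hne : ∀ J ⊆ J₀, J.Nonempty → ∑ j ∈ J, f j ≠ 0 := by
    intro J hJ hJne hsum
    obtain ⟨j₀, hj₀⟩ := hJne
    have hsplit : f j₀ + ∑ j ∈ J.erase j₀, f j = 0 := by
      rwa [Finset.add_sum_erase _ _ hj₀]
    have hfj : f j₀ = -∑ j ∈ J.erase j₀, f j := by exact eq_neg_of_add_eq_zero_left hsplit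
    have hmem2 : f j₀ ∈ (J.erase j₀).sup H := by
      rw [hfj]
      exact neg_mem (Submodule.sum_mem _ fun j hjm =>
        Finset.le_sup (f := H) hjm (hfmem j (hJ (Finset.mem_of_mem_erase hjm))))
    have hmem1 : f j₀ ∈ ({j₀} : Finset (Fin q)).sup H := by
      rw [Finset.sup_singleton]; exact hfmem j₀ (hJ hj₀)
    have hdisj : Disjoint ({j₀} : Finset (Fin q)) (J.erase j₀) :=
      Finset.disjoint_singleton_left.mpr (Finset.notMem_erase _ _)
    have hc1 : ({j₀} : Finset (Fin q)).card ≤ qstar := by rw [Finset.card_singleton]; exact hqstar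
    have hc2 : (J.erase j₀).card ≤ qstar :=
      le_trans (le_trans (Finset.card_erase_le) (Finset.card_le_card hJ)) hJ₀
    have := hangle _ _ hdisj hc1 hc2 (f j₀) hmem1 (f j₀) hmem2
    rw [real_inner_self_eq_norm_mul_norm] at this
    have hpos : 0 < ‖f j₀‖ := norm_pos_iff.mpr (hfne j₀ (hJ hj₀))
    nlinarith [mul_pos hpos hpos]
  refine ⟨hne, ?_⟩
  set S := J₀.powerset.filter Finset.Nonempty with hS
  by_cases hSne : S.Nonempty
  · refine ⟨S.inf' hSne fun J => ‖∑ j ∈ J, f j‖ ^ 2, ?_, ?_⟩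
    · rw [Finset.lt_inf'_iff]
      intro J hJmem
      rw [hS, Finset.mem_filter, Finset.mem_powerset] at hJmem
      exact pow_pos (norm_pos_iff.mpr (hne J hJmem.1 hJmem.2)) 2
    · intro J hJ hJne
      exact Finset.inf'_le _ (by rw [hS, Finset.mem_filter, Finset.mem_powerset]; exact ⟨hJ, hJne⟩)
  · refine ⟨1, one_pos, fun J hJ hJne => absurd ?_ hSne⟩
    exact ⟨J, by rw [hS, Finset.mem_filter, Finset.mem_powerset]; exact ⟨hJ, hJne⟩⟩
end

section
/- Let H be a real Hilbert space, let q and q* be positive integers, and let H₁, …, H_q be closed linear subspaces of H; for J ⊆ {1,…,q} write H_J = ∑_{j∈J} H_j and assume each H_J with |J| ≤ q* is a closed (complete) subspace, with orthogonal projection Π_J onto H_J. Assume there is ρ ∈ [0,1) such that for all disjoint subsets J₁, J₂ ⊆ {1,…,q} with |J₁|, |J₂| ≤ q* and all h₁ ∈ H_{J₁}, h₂ ∈ H_{J₂} one has ⟨h₁, h₂⟩ ≤ ρ‖h₁‖‖h₂‖. Let J₀ ⊆ {1,…,q} with |J₀| ≤ q*, let f_j ∈ H_j for j ∈ J₀,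 and set f = ∑_{j∈J₀} f_j. Let J ⊆ {1,…,q} with |J| ≤ q* and J₀ \ J ≠ ∅, and let l = |J₀ \ J|. Then ‖Π_{J₀} f‖² − ‖Π_J f‖² = ‖f − Π_J f‖² ≥ (1 − ρ²) κ_l, where κ_l = min_{J' ⊆ J₀, |J'| = l} ‖∑_{j∈J'} f_j‖². -/
open RealInnerProductSpace

/-- Proposition 1 of the paper (population-level selection criterion gap).
Orthogonal projections `Π_J f` onto the closed subspaces `H_J = ∑_{j∈J} H_j` are
encoded by their characteristic property: `p_J ∈ H_J` and `f - p_J ⊥ H_J`.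
For `J` with `|J| ≤ q*` missing `l = |J₀ \ J|` relevant indices,
`‖Π_{J₀}f‖² − ‖Π_J f‖² = ‖f − Π_J f‖² ≥ (1 − ρ²)κ_l`, where
`κ_l = min_{J'⊆J₀, |J'|=l} ‖∑_{j∈J'} f_j‖²` (written as an infimum). -/
theorem norms_of_projections_proposition1
    {H : Type*} [NormedAddCommGroup H] [InnerProductSpace ℝ H] [CompleteSpace H]
    (q qstar : ℕ) (hq : 0 < q) (hqstar : 0 < qstar)
    (Hs : Fin q → Submodule ℝ H) (hclosed : ∀ j, IsClosed (Hs j : Set H))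
    (hcomplete : ∀ J : Finset (Fin q), J.card ≤ qstar → IsComplete ((J.sup Hs : Submodule ℝ H) : Set H))
    (ρ : ℝ) (hρ0 : 0 ≤ ρ) (hρ1 : ρ < 1)
    (hangle : ∀ J₁ J₂ : Finset (Fin q), Disjoint J₁ J₂ →
      J₁.card ≤ qstar → J₂.card ≤ qstar →
      ∀ h₁ ∈ J₁.sup Hs, ∀ h₂ ∈ J₂.sup Hs, ⟪h₁, h₂⟫ ≤ ρ * ‖h₁‖ * ‖h₂‖)
    (J₀ : Finset (Fin q)) (hJ₀ : J₀.card ≤ qstar)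
    (fv : Fin q → H) (hfmem : ∀ j ∈ J₀, fv j ∈ Hs j)
    (f : H) (hf : f = ∑ j ∈ J₀, fv j)
    (J : Finset (Fin q)) (hJ : J.card ≤ qstar) (hJmiss : (J₀ \ J).Nonempty)
    (pJ₀ pJ : H)
    (hpJ₀mem : pJ₀ ∈ J₀.sup Hs) (hpJ₀orth : f - pJ₀ ∈ (J₀.sup Hs)ᗮ)
    (hpJmem : pJ ∈ J.sup Hs) (hpJorth : f - pJ ∈ (J.sup Hs)ᗮ) :
    ‖pJ₀‖ ^ 2 - ‖pJ‖ ^ 2 = ‖f - pJ‖ ^ 2 ∧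
    ‖f - pJ‖ ^ 2 ≥ (1 - ρ ^ 2) *
      sInf {x : ℝ | ∃ J' : Finset (Fin q), J' ⊆ J₀ ∧ J'.card = (J₀ \ J).card ∧
        x = ‖∑ j ∈ J', fv j‖ ^ 2} := by
  classical
  set D : Finset (Fin q) := J₀ \ J with hD
  set f₁ : H := ∑ j ∈ D, fv j with hf₁
  set f₂ : H := ∑ j ∈ J₀ ∩ J, fv j with hf₂
  have hsplit : f = f₁ + f₂ := by
    rw [hf, hf₁, hf₂, hD]
    rw [add_comm, Finset.sum_inter_add_sum_sdiff]
  -- memberships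
  have hf₁mem : f₁ ∈ D.sup Hs := by
    apply Submodule.sum_mem
    intro j hj
    exact Finset.le_sup (f := Hs) hj (hfmem j (Finset.mem_sdiff.mp hj).1)
  have hf₂mem : f₂ ∈ J.sup Hs := by
    apply Submodule.sum_mem
    intro j hj
    have : Hs j ≤ J.sup Hs := Finset.le_sup (f := Hs) (Finset.mem_inter.mp hj).2
    exact this (hfmem j (Finset.mem_inter.mp hj).1)
  have hfmemJ₀ : f ∈ J₀.sup Hs := by
    rw [hf]
    exact Submodule.sum_mem _ fun j hj => Finset.le_sup (f := Hs) hj (hfmem j hj)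
  -- pJ₀ = f
  have hpJ₀f : pJ₀ = f := by
    have h1 : f - pJ₀ ∈ J₀.sup Hs := Submodule.sub_mem _ hfmemJ₀ hpJ₀mem
    have h2 : f - pJ₀ = 0 := by
      have := hpJ₀orth (f - pJ₀) h1
      have := (inner_self_eq_zero (𝕜 := ℝ)).mp this
      exact this
    exact (sub_eq_zero.mp h2).symm
  -- Pythagoras for first part
  have hortho_pJ : ⟪f - pJ, pJ⟫ = (0 : ℝ) := by
    rw [real_inner_comm]; exact hpJorth pJ hpJmem
  have part1 : ‖pJ₀‖ ^ 2 - ‖pJ‖ ^ 2 = ‖f - pJ‖ ^ 2 := by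
    rw [hpJ₀f]
    have : f = (f - pJ) + pJ := by abel
    have hnorm : ‖f‖ ^ 2 = ‖f - pJ‖ ^ 2 + ‖pJ‖ ^ 2 := by
      calc ‖f‖ ^ 2 = ‖(f - pJ) + pJ‖ ^ 2 := by rw [← this]
        _ = ‖f - pJ‖ ^ 2 + 2 * ⟪f - pJ, pJ⟫ + ‖pJ‖ ^ 2 := by
            rw [← norm_add_sq_real]
        _ = ‖f - pJ‖ ^ 2 + ‖pJ‖ ^ 2 := by rw [hortho_pJ]; ring
    linarith
  refine ⟨part1, ?_⟩
  -- second part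
  set h : H := pJ - f₂ with hh
  have hhmem : h ∈ J.sup Hs := Submodule.sub_mem _ hpJmem hf₂mem
  have hgf : f - pJ = f₁ - h := by rw [hh, hsplit]; abel
  -- angle
  have hDdisj : Disjoint D J := Finset.sdiff_disjoint
  have hDcard : D.card ≤ qstar :=
    le_trans (Finset.card_le_card (Finset.sdiff_subset)) hJ₀
  have hang : ⟪f₁, h⟫ ≤ ρ * ‖f₁‖ * ‖h‖ :=
    hangle D J hDdisj hDcard hJ f₁ hf₁mem h hhmem
  have hexpand : ‖f - pJ‖ ^ 2 = ‖f₁‖ ^ 2 - 2 * ⟪f₁, h⟫ + ‖h‖ ^ 2 := by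
    rw [hgf, norm_sub_sq_real]
  have hmain : ‖f - pJ‖ ^ 2 ≥ (1 - ρ ^ 2) * ‖f₁‖ ^ 2 := by
    have hsq : (‖h‖ - ρ * ‖f₁‖) ^ 2 ≥ 0 := sq_nonneg _
    nlinarith [norm_nonneg f₁, norm_nonneg h]
  -- sInf bound
  set S : Set ℝ := {x : ℝ | ∃ J' : Finset (Fin q), J' ⊆ J₀ ∧ J'.card = (J₀ \ J).card ∧
    x = ‖∑ j ∈ J', fv j‖ ^ 2} with hS
  have hmemS : ‖f₁‖ ^ 2 ∈ S := ⟨D, Finset.sdiff_subset, rfl, rfl⟩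
  have hbdd : BddBelow S := by
    refine ⟨0, fun x hx => ?_⟩
    obtain ⟨J', _, _, hx⟩ := hx
    rw [hx]; positivity
  have hinf : sInf S ≤ ‖f₁‖ ^ 2 := csInf_le hbdd hmemS
  have hρ2 : (0 : ℝ) ≤ 1 - ρ ^ 2 := by nlinarith
  calc (1 - ρ ^ 2) * sInf S ≤ (1 - ρ ^ 2) * ‖f₁‖ ^ 2 :=
        mul_le_mul_of_nonneg_left hinf hρ2
    _ ≤ ‖f - pJ‖ ^ 2 := hmain
end

section
/- Let E be a real inner product space, let q and q* be positive integers, and let H₁, …, H_q be linear subspaces of E; for J ⊆ {1,…,q} write H_J = ∑_{j∈J} H_j. Then the following two conditions are equivalent: (i) there exists ρ ∈ [0,1) such that for all disjoint subsets J₁, J₂ ⊆ {1,…,q} with |J₁|, |J₂| ≤ q* and all h₁ ∈ H_{J₁}, h₂ ∈ H_{J₂} one has ⟨h₁, h₂⟩ ≤ ρ‖h₁‖‖h₂‖; (ii) there exists ε ∈ [0,1) such that for every J ⊆ {1,…,q} with |J| ≤ 2q* and all vectors f_j ∈ H_j (j ∈ J) one has ‖∑_{j∈J} f_j‖² ≥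 (1 − ε) ∑_{j∈J} ‖f_j‖². -/
open RealInnerProductSpace

section Aux

variable {E : Type*} [NormedAddCommGroup E] [InnerProductSpace ℝ E]
variable {q : ℕ} {H : Fin q → Submodule ℝ E}

/-- A sum of vectors in the `H j` lies in the sup. -/
lemma aux_sum_mem_sup (J : Finset (Fin q)) (f : Fin q → E) (hf : ∀ j ∈ J, f j ∈ H j) :
    ∑ j ∈ J, f j ∈ J.sup H :=
  Submodule.sum_mem _ fun j hj => (Finset.le_sup (f := H) hj : H j ≤ J.sup H) (hf j hj)

/-- Decompose a member of the sup as a sum. -/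
lemma aux_exists_decomp (J : Finset (Fin q)) (x : E) (hx : x ∈ J.sup H) :
    ∃ g : Fin q → E, (∀ j ∈ J, g j ∈ H j) ∧ ∑ j ∈ J, g j = x := by
  rw [Finset.sup_eq_iSup, Submodule.mem_iSup_finset_iff_exists_sum] at hx
  obtain ⟨μ, hμ⟩ := hx
  exact ⟨fun j => μ j, fun j _ => (μ j).2, hμ⟩

end Aux

/-- Lemma 3 of the paper: the minimal-angle condition with constant `ρ_{q*} < 1`
holds if and only if the restricted-eigenvalue-type condition with constant
`ε_{2q*} < 1` holds. -/
theorem norms_of_projections_lemma3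
    {E : Type*} [NormedAddCommGroup E] [InnerProductSpace ℝ E]
    (q qstar : ℕ) (hq : 0 < q) (hqstar : 0 < qstar)
    (H : Fin q → Submodule ℝ E) :
    (∃ ρ : ℝ, 0 ≤ ρ ∧ ρ < 1 ∧
      ∀ J₁ J₂ : Finset (Fin q), Disjoint J₁ J₂ →
        J₁.card ≤ qstar → J₂.card ≤ qstar →
        ∀ h₁ ∈ J₁.sup H, ∀ h₂ ∈ J₂.sup H, ⟪h₁, h₂⟫ ≤ ρ * ‖h₁‖ * ‖h₂‖) ↔
    (∃ ε : ℝ, 0 ≤ ε ∧ ε < 1 ∧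
      ∀ J : Finset (Fin q), J.card ≤ 2 * qstar →
        ∀ f : Fin q → E, (∀ j ∈ J, f j ∈ H j) →
          ‖∑ j ∈ J, f j‖ ^ 2 ≥ (1 - ε) * ∑ j ∈ J, ‖f j‖ ^ 2) := by
  constructor
  · rintro ⟨ρ, hρ0, hρ1, hρ⟩
    -- key splitting step
    have key : ∀ J₁ J₂ : Finset (Fin q), Disjoint J₁ J₂ →
        J₁.card ≤ qstar → J₂.card ≤ qstar →
        ∀ f : Fin q → E, (∀ j ∈ J₁, f j ∈ H j) → (∀ j ∈ J₂, f j ∈ H j) →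
        ‖(∑ j ∈ J₁, f j) + ∑ j ∈ J₂, f j‖ ^ 2 ≥
          (1 - ρ) * (‖∑ j ∈ J₁, f j‖ ^ 2 + ‖∑ j ∈ J₂, f j‖ ^ 2) := by
      intro J₁ J₂ hdisj hc1 hc2 f hf1 hf2
      set a := ∑ j ∈ J₁, f j with ha
      set b := ∑ j ∈ J₂, f j with hb
      have hma : a ∈ J₁.sup H := aux_sum_mem_sup J₁ f hf1
      have hmb : b ∈ J₂.sup H := aux_sum_mem_sup J₂ f hf2
      have h1 : ⟪-a, b⟫ ≤ ρ * ‖-a‖ * ‖b‖ :=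
        hρ J₁ J₂ hdisj hc1 hc2 (-a) (Submodule.neg_mem _ hma) b hmb
      rw [inner_neg_left, norm_neg] at h1
      have hsq : ‖a + b‖ ^ 2 = ‖a‖ ^ 2 + 2 * ⟪a, b⟫ + ‖b‖ ^ 2 := norm_add_sq_real a b
      nlinarith [sq_nonneg (‖a‖ - ‖b‖), norm_nonneg a, norm_nonneg b,
        mul_nonneg (norm_nonneg a) (norm_nonneg b)]
    have hρpos : (0:ℝ) < 1 - ρ := by linarith
    -- halving claim
    have claim : ∀ n : ℕ, ∀ J : Finset (Fin q), J.card ≤ 2 ^ n → J.card ≤ qstar →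
        ∀ f : Fin q → E, (∀ j ∈ J, f j ∈ H j) →
        ‖∑ j ∈ J, f j‖ ^ 2 ≥ (1 - ρ) ^ n * ∑ j ∈ J, ‖f j‖ ^ 2 := by
      intro n
      induction n with
      | zero =>
        intro J hJ _ f _
        simp only [pow_zero, one_mul]
        interval_cases h : J.card
        · rw [Finset.card_eq_zero] at h; simp [h]
        · rw [Finset.card_eq_one] at h; obtain ⟨j, rfl⟩ := h; simp
      | succ n ih =>
        intro J hJ hJq f hf
        obtain ⟨J₁, hsub, hcard⟩ := Finset.exists_subset_card_eq
          (n := min J.card (2 ^ n)) (min_le_left _ _)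
        set J₂ := J \ J₁ with hJ₂
        have hdisj : Disjoint J₁ J₂ := Finset.disjoint_sdiff
        have hunion : J₁ ∪ J₂ = J := Finset.union_sdiff_of_subset hsub
        have hc2 : J₂.card = J.card - J₁.card := Finset.card_sdiff_of_subset hsub
        have hc1n : J₁.card ≤ 2 ^ n := by rw [hcard]; exact min_le_right _ _
        have hc2n : J₂.card ≤ 2 ^ n := by
          rw [hc2, hcard]
          rcases le_total J.card (2 ^ n) with h | h
          · simp [min_eq_left h]
          · rw [min_eq_right h]; omega
        have hc1q : J₁.card ≤ qstar := le_trans (Finset.card_le_card hsub) hJq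
        have hc2q : J₂.card ≤ qstar := le_trans (Finset.card_le_card (Finset.sdiff_subset)) hJq
        have hsum : ∑ j ∈ J, f j = (∑ j ∈ J₁, f j) + ∑ j ∈ J₂, f j := by
          rw [← hunion, Finset.sum_union hdisj]
        have hsumn : ∑ j ∈ J, ‖f j‖ ^ 2 = (∑ j ∈ J₁, ‖f j‖ ^ 2) + ∑ j ∈ J₂, ‖f j‖ ^ 2 := by
          rw [← hunion, Finset.sum_union hdisj]
        have h1 := ih J₁ hc1n hc1q f (fun j hj => hf j (hsub hj))
        have h2 := ih J₂ hc2n hc2q f (fun j hj => hf j (Finset.sdiff_subset hj))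
        have hk := key J₁ J₂ hdisj hc1q hc2q f (fun j hj => hf j (hsub hj))
          (fun j hj => hf j (Finset.sdiff_subset hj))
        rw [hsum, hsumn]
        have hpn : (0:ℝ) ≤ (1 - ρ) ^ n := le_of_lt (pow_pos hρpos n)
        calc ‖(∑ j ∈ J₁, f j) + ∑ j ∈ J₂, f j‖ ^ 2
            ≥ (1 - ρ) * (‖∑ j ∈ J₁, f j‖ ^ 2 + ‖∑ j ∈ J₂, f j‖ ^ 2) := hk
          _ ≥ (1 - ρ) * ((1 - ρ) ^ n * (∑ j ∈ J₁, ‖f j‖ ^ 2)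
                + (1 - ρ) ^ n * (∑ j ∈ J₂, ‖f j‖ ^ 2)) := by
              exact mul_le_mul_of_nonneg_left (add_le_add h1 h2) (le_of_lt hρpos)
          _ = (1 - ρ) ^ (n + 1) * ((∑ j ∈ J₁, ‖f j‖ ^ 2) + ∑ j ∈ J₂, ‖f j‖ ^ 2) := by ring
    refine ⟨1 - (1 - ρ) ^ (qstar + 1), ?_, ?_, ?_⟩
    · have : (1 - ρ) ^ (qstar + 1) ≤ 1 := pow_le_one₀ (by linarith) (by linarith)
      linarith
    · have : (0:ℝ) < (1 - ρ) ^ (qstar + 1) := pow_pos hρpos _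
      linarith
    · intro J hJ f hf
      have hred : (1 : ℝ) - (1 - (1 - ρ) ^ (qstar + 1)) = (1 - ρ) ^ (qstar + 1) := by ring
      rw [hred]
      obtain ⟨J₁, hsub, hcard⟩ := Finset.exists_subset_card_eq
        (n := min J.card qstar) (min_le_left _ _)
      set J₂ := J \ J₁ with hJ₂
      have hdisj : Disjoint J₁ J₂ := Finset.disjoint_sdiff
      have hunion : J₁ ∪ J₂ = J := Finset.union_sdiff_of_subset hsub
      have hc1q : J₁.card ≤ qstar := by rw [hcard]; exact min_le_right _ _
      have hc2q : J₂.card ≤ qstar := by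
        have := Finset.card_sdiff_of_subset hsub
        rw [this, hcard]
        rcases le_total J.card qstar with h | h
        · simp [min_eq_left h]
        · rw [min_eq_right h]; omega
      have hpow : ∀ m : ℕ, m ≤ qstar → m ≤ 2 ^ qstar := fun m hm =>
        le_trans hm (Nat.lt_two_pow_self (n := qstar)).le
      have h1 := claim qstar J₁ (hpow _ hc1q) hc1q f (fun j hj => hf j (hsub hj))
      have h2 := claim qstar J₂ (hpow _ hc2q) hc2q f (fun j hj => hf j (Finset.sdiff_subset hj))
      have hk := key J₁ J₂ hdisj hc1q hc2q f (fun j hj => hf j (hsub hj))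
        (fun j hj => hf j (Finset.sdiff_subset hj))
      have hsum : ∑ j ∈ J, f j = (∑ j ∈ J₁, f j) + ∑ j ∈ J₂, f j := by
        rw [← hunion, Finset.sum_union hdisj]
      have hsumn : ∑ j ∈ J, ‖f j‖ ^ 2 = (∑ j ∈ J₁, ‖f j‖ ^ 2) + ∑ j ∈ J₂, ‖f j‖ ^ 2 := by
        rw [← hunion, Finset.sum_union hdisj]
      rw [hsum, hsumn]
      have hpn : (0:ℝ) ≤ (1 - ρ) ^ qstar := le_of_lt (pow_pos hρpos _)
      calc ‖(∑ j ∈ J₁, f j) + ∑ j ∈ J₂, f j‖ ^ 2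
          ≥ (1 - ρ) * (‖∑ j ∈ J₁, f j‖ ^ 2 + ‖∑ j ∈ J₂, f j‖ ^ 2) := hk
        _ ≥ (1 - ρ) * ((1 - ρ) ^ qstar * (∑ j ∈ J₁, ‖f j‖ ^ 2)
              + (1 - ρ) ^ qstar * (∑ j ∈ J₂, ‖f j‖ ^ 2)) := by
            apply mul_le_mul_of_nonneg_left (add_le_add h1 h2) (le_of_lt hρpos)
        _ = (1 - ρ) ^ (qstar + 1) * ((∑ j ∈ J₁, ‖f j‖ ^ 2) + ∑ j ∈ J₂, ‖f j‖ ^ 2) := by ring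
  · rintro ⟨ε, hε0, hε1, hε⟩
    have hqs : (1:ℝ) ≤ (qstar : ℝ) := by exact_mod_cast hqstar
    have hqspos : (0:ℝ) < (qstar : ℝ) := by linarith
    refine ⟨1 - (1 - ε) / qstar, ?_, ?_, ?_⟩
    · have : (1 - ε) / (qstar : ℝ) ≤ 1 := by
        rw [div_le_one hqspos]; linarith
      linarith
    · have : (0:ℝ) < (1 - ε) / qstar := div_pos (by linarith) hqspos
      linarith
    · intro J₁ J₂ hdisj hc1 hc2 h₁ hm1 h₂ hm2
      -- key2 : distance bound
      have key2 : ∀ u₁ ∈ J₁.sup H, ∀ u₂ ∈ J₂.sup H,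
          ‖u₁ - u₂‖ ^ 2 ≥ (1 - ε) / qstar * (‖u₁‖ ^ 2 + ‖u₂‖ ^ 2) := by
        intro u₁ hu1 u₂ hu2
        obtain ⟨g₁, hg1, hg1s⟩ := aux_exists_decomp J₁ u₁ hu1
        obtain ⟨g₂, hg2, hg2s⟩ := aux_exists_decomp J₂ u₂ hu2
        classical
        set f : Fin q → E := fun j => if j ∈ J₁ then g₁ j else -g₂ j with hfdef
        have hfsum : ∑ j ∈ J₁ ∪ J₂, f j = u₁ - u₂ := by
          rw [Finset.sum_union hdisj]
          have e1 : ∑ j ∈ J₁, f j = u₁ := by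
            rw [← hg1s]; exact Finset.sum_congr rfl fun j hj => by simp [hfdef, hj]
          have e2 : ∑ j ∈ J₂, f j = -u₂ := by
            rw [← hg2s, ← Finset.sum_neg_distrib]
            refine Finset.sum_congr rfl fun j hj => ?_
            have : j ∉ J₁ := Finset.disjoint_right.mp hdisj hj
            simp [hfdef, this]
          rw [e1, e2]; abel
        have hfmem : ∀ j ∈ J₁ ∪ J₂, f j ∈ H j := by
          intro j hj
          rcases Finset.mem_union.mp hj with hj1 | hj2
          · simpa [hfdef, hj1] using hg1 j hj1
          · have hn : j ∉ J₁ := Finset.disjoint_right.mp hdisj hj2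
            simpa [hfdef, hn] using Submodule.neg_mem _ (hg2 j hj2)
        have hcard : (J₁ ∪ J₂).card ≤ 2 * qstar := by
          rw [Finset.card_union_of_disjoint hdisj]; omega
        have hmain := hε (J₁ ∪ J₂) hcard f hfmem
        rw [hfsum] at hmain
        have hfn : ∑ j ∈ J₁ ∪ J₂, ‖f j‖ ^ 2
            = (∑ j ∈ J₁, ‖g₁ j‖ ^ 2) + ∑ j ∈ J₂, ‖g₂ j‖ ^ 2 := by
          rw [Finset.sum_union hdisj]
          congr 1
          · exact Finset.sum_congr rfl fun j hj => by simp [hfdef, hj]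
          · refine Finset.sum_congr rfl fun j hj => ?_
            have : j ∉ J₁ := Finset.disjoint_right.mp hdisj hj
            simp [hfdef, this]
        rw [hfn] at hmain
        -- Cauchy-Schwarz: ‖u_i‖² ≤ qstar * S_i
        have cauchy : ∀ (J : Finset (Fin q)) (g : Fin q → E), J.card ≤ qstar →
            ‖∑ j ∈ J, g j‖ ^ 2 ≤ (qstar : ℝ) * ∑ j ∈ J, ‖g j‖ ^ 2 := by
          intro J g hJ
          have h1 : ‖∑ j ∈ J, g j‖ ≤ ∑ j ∈ J, ‖g j‖ := norm_sum_le _ _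
          have h2 : (∑ j ∈ J, ‖g j‖) ^ 2 ≤ (J.card : ℝ) * ∑ j ∈ J, ‖g j‖ ^ 2 :=
            sq_sum_le_card_mul_sum_sq
          have h3 : ‖∑ j ∈ J, g j‖ ^ 2 ≤ (∑ j ∈ J, ‖g j‖) ^ 2 :=
            pow_le_pow_left₀ (norm_nonneg _) h1 2
          have h4 : (J.card : ℝ) ≤ (qstar : ℝ) := by exact_mod_cast hJ
          have h5 : (0:ℝ) ≤ ∑ j ∈ J, ‖g j‖ ^ 2 :=
            Finset.sum_nonneg fun j _ => sq_nonneg _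
          nlinarith
        have c1 : ‖u₁‖ ^ 2 ≤ (qstar : ℝ) * ∑ j ∈ J₁, ‖g₁ j‖ ^ 2 := by
          rw [← hg1s]; exact cauchy J₁ g₁ hc1
        have c2 : ‖u₂‖ ^ 2 ≤ (qstar : ℝ) * ∑ j ∈ J₂, ‖g₂ j‖ ^ 2 := by
          rw [← hg2s]; exact cauchy J₂ g₂ hc2
        have hεnn : (0:ℝ) < 1 - ε := by linarith
        rw [ge_iff_le, div_mul_eq_mul_div, div_le_iff₀ hqspos]
        nlinarith
      -- handle zero cases, then normalize
      rcases eq_or_ne h₁ 0 with rfl | hne1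
      · simp
      rcases eq_or_ne h₂ 0 with rfl | hne2
      · simp
      have hn1 : (0:ℝ) < ‖h₁‖ := norm_pos_iff.mpr hne1
      have hn2 : (0:ℝ) < ‖h₂‖ := norm_pos_iff.mpr hne2
      set u₁ := ‖h₁‖⁻¹ • h₁ with hu1def
      set u₂ := ‖h₂‖⁻¹ • h₂ with hu2def
      have hu1m : u₁ ∈ J₁.sup H := Submodule.smul_mem _ _ hm1
      have hu2m : u₂ ∈ J₂.sup H := Submodule.smul_mem _ _ hm2
      have hnu1 : ‖u₁‖ = 1 := by
        rw [hu1def, norm_smul, norm_inv, norm_norm, inv_mul_cancel₀ hn1.ne']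
      have hnu2 : ‖u₂‖ = 1 := by
        rw [hu2def, norm_smul, norm_inv, norm_norm, inv_mul_cancel₀ hn2.ne']
      have hk := key2 u₁ hu1m u₂ hu2m
      rw [hnu1, hnu2] at hk
      have hexp : ‖u₁ - u₂‖ ^ 2 = 2 - 2 * ⟪u₁, u₂⟫ := by
        have := norm_sub_sq_real u₁ u₂
        rw [hnu1, hnu2] at this; rw [this]; ring
      rw [hexp] at hk
      have hiu : ⟪u₁, u₂⟫ ≤ 1 - (1 - ε) / qstar := by nlinarith
      have hscale : ⟪h₁, h₂⟫ = ‖h₁‖ * ‖h₂‖ * ⟪u₁, u₂⟫ := by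
        rw [hu1def, hu2def, real_inner_smul_left, real_inner_smul_right]
        field_simp
      rw [hscale]
      calc ‖h₁‖ * ‖h₂‖ * ⟪u₁, u₂⟫
          ≤ ‖h₁‖ * ‖h₂‖ * (1 - (1 - ε) / qstar) :=
            mul_le_mul_of_nonneg_left hiu (by positivity)
        _ = (1 - (1 - ε) / qstar) * ‖h₁‖ * ‖h₂‖ := by ring
end

section
/- Let E be a real inner product space, let q and q* be positive integers, and let H₁, …, H_q be linear subspaces of E. Let ε, ε' ≥ 0 with ε < 1 and suppose: (a) for every J ⊆ {1,…,q} with |J| ≤ 2q* and all f_j ∈ H_j (j ∈ J), ‖∑_{j∈J} f_j‖² ≥ (1 − ε) ∑_{j∈J} ‖f_j‖²; (b) for every J ⊆ {1,…,q} with |J| ≤ q* and all f_j ∈ H_j (j ∈ J), ‖∑_{j∈J} f_j‖² ≤ (1 + ε') ∑_{j∈J} ‖f_j‖². Then for all disjoint subsets J₁, J₂ ⊆ {1,…,q} with |J₁|, |J₂| ≤ q* and all f_j ∈ H_j (j ∈ J₁ ∪ J₂) one has ‖∑_{j∈J₁∪J₂} f_j‖² ≥ ((1 − ε)/(1 + ε'))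 (‖∑_{j∈J₁} f_j‖² + ‖∑_{j∈J₂} f_j‖²). -/
/-- The quantitative inequality of Appendix B of the paper: under the lower
restricted-isometry bound with constant `1 − ε` (order `2q*`) and the upper bound
with constant `1 + ε'` (order `q*`), disjointly supported additive functions satisfy
`‖f_{J₁} + f_{J₂}‖² ≥ ((1 − ε)/(1 + ε'))(‖f_{J₁}‖² + ‖f_{J₂}‖²)`. -/
theorem norms_of_projections_appendixB
    {E : Type*} [NormedAddCommGroup E] [InnerProductSpace ℝ E]
    (q qstar : ℕ) (hq : 0 < q) (hqstar : 0 < qstar)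
    (H : Fin q → Submodule ℝ E)
    (ε ε' : ℝ) (hε0 : 0 ≤ ε) (hε1 : ε < 1) (hε'0 : 0 ≤ ε')
    (hlow : ∀ J : Finset (Fin q), J.card ≤ 2 * qstar →
      ∀ f : Fin q → E, (∀ j ∈ J, f j ∈ H j) →
        ‖∑ j ∈ J, f j‖ ^ 2 ≥ (1 - ε) * ∑ j ∈ J, ‖f j‖ ^ 2)
    (hup : ∀ J : Finset (Fin q), J.card ≤ qstar →
      ∀ f : Fin q → E, (∀ j ∈ J, f j ∈ H j) →
        ‖∑ j ∈ J, f j‖ ^ 2 ≤ (1 + ε') * ∑ j ∈ J, ‖f j‖ ^ 2) :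
    ∀ J₁ J₂ : Finset (Fin q), Disjoint J₁ J₂ →
      J₁.card ≤ qstar → J₂.card ≤ qstar →
      ∀ f : Fin q → E, (∀ j ∈ J₁ ∪ J₂, f j ∈ H j) →
        ‖∑ j ∈ J₁ ∪ J₂, f j‖ ^ 2 ≥
          ((1 - ε) / (1 + ε')) * (‖∑ j ∈ J₁, f j‖ ^ 2 + ‖∑ j ∈ J₂, f j‖ ^ 2) := by
  intro J₁ J₂ hd h1 h2 f hf
  have hcard : (J₁ ∪ J₂).card ≤ 2 * qstar := by
    calc (J₁ ∪ J₂).card ≤ J₁.card + J₂.card := Finset.card_union_le _ _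
    _ ≤ 2 * qstar := by omega
  have hL := hlow (J₁ ∪ J₂) hcard f hf
  have hU1 := hup J₁ h1 f (fun j hj => hf j (Finset.mem_union_left _ hj))
  have hU2 := hup J₂ h2 f (fun j hj => hf j (Finset.mem_union_right _ hj))
  have hsum : ∑ j ∈ J₁ ∪ J₂, ‖f j‖ ^ 2 = (∑ j ∈ J₁, ‖f j‖ ^ 2) + ∑ j ∈ J₂, ‖f j‖ ^ 2 :=
    Finset.sum_union hd
  have hpos : (0:ℝ) < 1 + ε' := by linarith
  have hne : (0:ℝ) ≤ 1 - ε := by linarith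
  have k1 := mul_le_mul_of_nonneg_left hU1 hne
  have k2 := mul_le_mul_of_nonneg_left hU2 hne
  have k3 := mul_le_mul_of_nonneg_left hL hpos.le
  rw [hsum] at k3
  rw [ge_iff_le, div_mul_eq_mul_div, div_le_iff₀ hpos]
  ring_nf at k1 k2 k3 ⊢
  linarith
end

section
/- Let E be a real inner product space, let A and B be linear subspaces of E, and let N : E → ℝ be a nonnegative function. Let δ ∈ (0,1) and ρ ∈ [0,1). Assume: (i) (1 − δ)‖g‖² ≤ N(g)² ≤ (1 + δ)‖g‖² for all g ∈ A + B; (ii) ‖a + b‖² ≥ (1 − ρ²)‖a‖² for all a ∈ A and b ∈ B. Then for all a ∈ A and b ∈ B, N(a + b)² ≥ ((1 − δ)/(1 + δ)) (1 − ρ²) N(a)². -/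
/-- Lemma 6 of the paper: if the nonnegative function `N` (the empirical norm)
satisfies `(1−δ)‖g‖² ≤ N(g)² ≤ (1+δ)‖g‖²` on `A + B` and the angle separation
`‖a + b‖² ≥ (1 − ρ²)‖a‖²` holds, then
`N(a + b)² ≥ ((1−δ)/(1+δ))(1 − ρ²) N(a)²` for all `a ∈ A`, `b ∈ B`. -/
theorem norms_of_projections_lemma6
    {E : Type*} [NormedAddCommGroup E] [InnerProductSpace ℝ E]
    (A B : Submodule ℝ E) (N : E → ℝ) (hN : ∀ g, 0 ≤ N g)
    (δ ρ : ℝ) (hδ0 : 0 < δ) (hδ1 : δ < 1) (hρ0 : 0 ≤ ρ) (hρ1 : ρ < 1)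
    (hemp : ∀ g ∈ A ⊔ B, (1 - δ) * ‖g‖ ^ 2 ≤ (N g) ^ 2 ∧ (N g) ^ 2 ≤ (1 + δ) * ‖g‖ ^ 2)
    (hangle : ∀ a ∈ A, ∀ b ∈ B, ‖a + b‖ ^ 2 ≥ (1 - ρ ^ 2) * ‖a‖ ^ 2) :
    ∀ a ∈ A, ∀ b ∈ B,
      (N (a + b)) ^ 2 ≥ ((1 - δ) / (1 + δ)) * (1 - ρ ^ 2) * (N a) ^ 2 := by
  intro a ha b hb
  have haM : a ∈ A ⊔ B := Submodule.mem_sup_left ha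
  have habM : a + b ∈ A ⊔ B :=
    Submodule.add_mem _ haM (Submodule.mem_sup_right hb)
  have h1 := (hemp _ habM).1
  have h2 := (hemp _ haM).2
  have h3 := hangle a ha b hb
  have hδp : (0:ℝ) < 1 + δ := by linarith
  have hρ2 : (0:ℝ) ≤ 1 - ρ ^ 2 := by nlinarith
  have hδm : (0:ℝ) ≤ 1 - δ := by linarith
  have hna : ‖a‖ ^ 2 ≥ (N a) ^ 2 / (1 + δ) := by
    rw [ge_iff_le, div_le_iff₀ hδp]; linarith
  have : (N (a + b)) ^ 2 ≥ (1 - δ) * ((1 - ρ ^ 2) * ((N a) ^ 2 / (1 + δ))) := by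
    calc (N (a+b))^2 ≥ (1 - δ) * ‖a + b‖ ^ 2 := h1
      _ ≥ (1 - δ) * ((1 - ρ ^ 2) * ‖a‖ ^ 2) := by nlinarith
      _ ≥ (1 - δ) * ((1 - ρ ^ 2) * ((N a) ^ 2 / (1 + δ))) := by
          apply mul_le_mul_of_nonneg_left _ hδm
          exact mul_le_mul_of_nonneg_left hna hρ2
  calc (N (a+b))^2 ≥ (1 - δ) * ((1 - ρ ^ 2) * ((N a) ^ 2 / (1 + δ))) := this
    _ = ((1 - δ) / (1 + δ)) * (1 - ρ ^ 2) * (N a) ^ 2 := by ring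
end

section
/- Let H be a real Hilbert space, let U and V be complete (closed) linear subspaces of H with orthogonal projections P onto U and Q onto V. Let f, v ∈ H with v ∈ U (so Pv = v). Then ‖Pf‖² − ‖Qf‖² ≥ (2/3)(‖Pv‖² − ‖Qv‖²) − 4‖f − v‖². -/
open scoped RealInnerProductSpace

private lemma pyth_aux {H : Type*} [NormedAddCommGroup H] [InnerProductSpace ℝ H]
    (K : Submodule ℝ H) [CompleteSpace K] (x : H) :
    ‖x‖ ^ 2 = ‖(K.orthogonalProjectionOnto x : H)‖ ^ 2 + ‖x - K.orthogonalProjectionOnto x‖ ^ 2 := by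
  have h : (inner ℝ ((K.orthogonalProjectionOnto x : H)) (x - K.orthogonalProjectionOnto x) : ℝ) = 0 :=
    Submodule.inner_right_of_mem_orthogonal (K.orthogonalProjectionOnto x).2
      (Submodule.sub_starProjection_mem_orthogonal (K := K) x)
  have h2 := norm_add_sq_real (K.orthogonalProjectionOnto x : H) (x - K.orthogonalProjectionOnto x)
  rw [add_sub_cancel, h] at h2
  linarith

/-- The key inequality (G.3) of Appendix G of the paper: for orthogonal projections
`P`, `Q` onto complete subspaces `U`, `V` of a real Hilbert space and `v ∈ U`,
`‖Pf‖² − ‖Qf‖² ≥ (2/3)(‖Pv‖² − ‖Qv‖²) − 4‖f − v‖²`. -/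
theorem norms_of_projections_appendixG
    {H : Type*} [NormedAddCommGroup H] [InnerProductSpace ℝ H]
    (U V : Submodule ℝ H) [CompleteSpace U] [CompleteSpace V]
    (f v : H) (hv : v ∈ U) :
    ‖(U.orthogonalProjectionOnto f : H)‖ ^ 2 - ‖(V.orthogonalProjectionOnto f : H)‖ ^ 2 ≥
      (2 / 3 : ℝ) * (‖(U.orthogonalProjectionOnto v : H)‖ ^ 2 -
        ‖(V.orthogonalProjectionOnto v : H)‖ ^ 2) - 4 * ‖f - v‖ ^ 2 := by
  have hPv : (U.orthogonalProjectionOnto v : H) = v := Submodule.starProjection_eq_self_iff.mpr hv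
  set ε := ‖f - v‖ with hε
  set t := ‖v - V.orthogonalProjectionOnto v‖ with ht
  set p := ‖f - U.orthogonalProjectionOnto f‖ with hp
  set q := ‖f - V.orthogonalProjectionOnto f‖ with hq
  -- Pythagoras facts
  have hPf : ‖(U.orthogonalProjectionOnto f : H)‖ ^ 2 = ‖f‖ ^ 2 - p ^ 2 := by
    have := pyth_aux U f; linarith
  have hQf : ‖(V.orthogonalProjectionOnto f : H)‖ ^ 2 = ‖f‖ ^ 2 - q ^ 2 := by
    have := pyth_aux V f; linarith
  have hQv : ‖(V.orthogonalProjectionOnto v : H)‖ ^ 2 = ‖v‖ ^ 2 - t ^ 2 := by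
    have := pyth_aux V v; linarith
  -- p ≤ ε
  have hpε : p ≤ ε := by
    have h1 := pyth_aux U (f - v)
    have h2 : f - v - (U.orthogonalProjectionOnto (f - v) : H) = f - U.orthogonalProjectionOnto f := by
      rw [map_sub]
      push_cast
      rw [hPv]
      abel
    rw [h2] at h1
    have := sq_nonneg ‖(U.orthogonalProjectionOnto (f - v) : H)‖
    nlinarith [norm_nonneg (f - v), norm_nonneg (f - U.orthogonalProjectionOnto f : H)]
  -- t ≤ q + ε
  have htq : t ≤ q + ε := by
    have h2 : v - f - (V.orthogonalProjectionOnto (v - f) : H)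
        = (v - V.orthogonalProjectionOnto v) - (f - V.orthogonalProjectionOnto f) := by
      rw [map_sub]; push_cast; abel
    have h3 : ‖(v - V.orthogonalProjectionOnto v) - (f - V.orthogonalProjectionOnto f)‖ ≤ ‖v - f‖ := by
      rw [← h2]
      have h1 := pyth_aux V (v - f)
      nlinarith [norm_nonneg (v - f), sq_nonneg ‖(V.orthogonalProjectionOnto (v - f) : H)‖,
        norm_nonneg (v - f - (V.orthogonalProjectionOnto (v - f) : H))]
    have h4 : t ≤ q + ‖(v - V.orthogonalProjectionOnto v) - (f - V.orthogonalProjectionOnto f)‖ := by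
      calc t = ‖(f - V.orthogonalProjectionOnto f) +
          ((v - V.orthogonalProjectionOnto v) - (f - V.orthogonalProjectionOnto f))‖ := by
            rw [ht]; congr 1; abel
          _ ≤ q + ‖(v - V.orthogonalProjectionOnto v) - (f - V.orthogonalProjectionOnto f)‖ :=
            norm_add_le _ _
    have h5 : ‖v - f‖ = ε := by rw [hε, norm_sub_rev]
    linarith
  rw [hPf, hQf, hPv, hQv]
  have hq0 : 0 ≤ q := norm_nonneg _
  have hp0 : 0 ≤ p := norm_nonneg _
  have hε0 : 0 ≤ ε := norm_nonneg _
  have ht0 : 0 ≤ t := norm_nonneg _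
  nlinarith [sq_nonneg (q - 2 * ε), sq_nonneg (t - q - ε), mul_nonneg hq0 hε0,
    mul_nonneg ht0 hε0, mul_nonneg hq0 ht0]
end

section
/- Let E be a real Hilbert space, let q and q* be positive integers, and let W₁, …, W_q be finite-dimensional linear subspaces of E; for J ⊆ {1,…,q} write W_J = ∑_{j∈J} W_j and let P_J denote the orthogonal projection of E onto W_J. Assume there is ρ ∈ [0,1) such that for all disjoint subsets J₁, J₂ ⊆ {1,…,q} with |J₁|, |J₂| ≤ q* and all w₁ ∈ W_{J₁}, w₂ ∈ W_{J₂} one has ⟨w₁, w₂⟩ ≤ ρ‖w₁‖‖w₂‖. Let J₀ ⊆ {1,…,q} with |J₀| ≤ q*, let v_j ∈ W_j with v_j ≠ 0 for all j ∈ J₀, and set f = ∑_{j∈J₀} v_j. Then for every J ⊆ {1,…,q} with |J| ≤ q* and J₀ ⊄ J one has ‖P_J f‖² < ‖P_{J₀} f‖². Consequently, every subset J* ⊆ {1,…,q} with |J*| ≤ q* that maximizes J ↦ ‖P_J f‖² over all subsets of cardinality at most q* satisfies J₀ ⊆ J*. -/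
open RealInnerProductSpace

/-- The noiseless/parametric core of the paper's variable selection criterion:
under the minimal-angle separation assumption, with `f = ∑_{j∈J₀} v_j` and `v_j ≠ 0`,
orthogonal projections `P_J f` onto `W_J = ∑_{j∈J} W_j` (encoded via their
characteristic property `P J ∈ W_J`, `f − P J ⊥ W_J`) satisfy
`‖P_J f‖² < ‖P_{J₀} f‖²` whenever `|J| ≤ q*` and `J₀ ⊄ J`; consequently any
maximizer `J*` of `J ↦ ‖P_J f‖²` over subsets of cardinality at most `q*`
contains `J₀`. -/
theorem norms_of_projections_noiseless_selection
    {E : Type*} [NormedAddCommGroup E] [InnerProductSpace ℝ E] [CompleteSpace E]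
    (q qstar : ℕ) (hq : 0 < q) (hqstar : 0 < qstar)
    (W : Fin q → Submodule ℝ E) (hfd : ∀ j, FiniteDimensional ℝ (W j))
    (ρ : ℝ) (hρ0 : 0 ≤ ρ) (hρ1 : ρ < 1)
    (hangle : ∀ J₁ J₂ : Finset (Fin q), Disjoint J₁ J₂ →
      J₁.card ≤ qstar → J₂.card ≤ qstar →
      ∀ w₁ ∈ J₁.sup W, ∀ w₂ ∈ J₂.sup W, ⟪w₁, w₂⟫ ≤ ρ * ‖w₁‖ * ‖w₂‖)
    (J₀ : Finset (Fin q)) (hJ₀ : J₀.card ≤ qstar)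
    (v : Fin q → E) (hvmem : ∀ j ∈ J₀, v j ∈ W j) (hvne : ∀ j ∈ J₀, v j ≠ 0)
    (f : E) (hf : f = ∑ j ∈ J₀, v j)
    (P : Finset (Fin q) → E)
    (hPmem : ∀ J : Finset (Fin q), P J ∈ J.sup W)
    (hPorth : ∀ J : Finset (Fin q), f - P J ∈ (J.sup W)ᗮ) :
    (∀ J : Finset (Fin q), J.card ≤ qstar → ¬ J₀ ⊆ J → ‖P J‖ ^ 2 < ‖P J₀‖ ^ 2) ∧
    (∀ Jstar : Finset (Fin q), Jstar.card ≤ qstar →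
      (∀ J : Finset (Fin q), J.card ≤ qstar → ‖P J‖ ^ 2 ≤ ‖P Jstar‖ ^ 2) →
      J₀ ⊆ Jstar) := by
  -- Key lemma: a vector in two "well-separated" sums of subspaces vanishes.
  have key : ∀ J₁ J₂ : Finset (Fin q), Disjoint J₁ J₂ → J₁.card ≤ qstar →
      J₂.card ≤ qstar → ∀ x, x ∈ J₁.sup W → x ∈ J₂.sup W → x = 0 := by
    intro J₁ J₂ hd h1 h2 x hx1 hx2
    have h := hangle J₁ J₂ hd h1 h2 x hx1 x hx2
    rw [real_inner_self_eq_norm_sq, pow_two] at h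
    by_contra hx
    have hpos : 0 < ‖x‖ := norm_pos_iff.mpr hx
    nlinarith [mul_pos hpos hpos]
  have hfmem : f ∈ J₀.sup W := by
    rw [hf]
    exact Submodule.sum_mem _ fun j hj => (Finset.le_sup hj : W j ≤ J₀.sup W) (hvmem j hj)
  have hPJ₀ : P J₀ = f := by
    have hmem : f - P J₀ ∈ J₀.sup W := Submodule.sub_mem _ hfmem (hPmem J₀)
    have h0 : ⟪f - P J₀, f - P J₀⟫ = (0:ℝ) :=
      (Submodule.mem_orthogonal _ _).mp (hPorth J₀) (f - P J₀) hmem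
    rw [inner_self_eq_zero, sub_eq_zero] at h0
    exact h0.symm
  have part1 : ∀ J : Finset (Fin q), J.card ≤ qstar → ¬ J₀ ⊆ J →
      ‖P J‖ ^ 2 < ‖P J₀‖ ^ 2 := by
    intro J hJ hsub
    have hne : f ≠ P J := by
      intro heq
      set S := J₀ \ J with hSdef
      have hScard : S.card ≤ qstar :=
        le_trans (Finset.card_le_card Finset.sdiff_subset) hJ₀
      have hbS : (∑ j ∈ S, v j) ∈ S.sup W :=
        Submodule.sum_mem _ fun j hj =>
          (Finset.le_sup hj : W j ≤ S.sup W) (hvmem j (Finset.mem_sdiff.mp hj).1)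
      have hbJ : (∑ j ∈ S, v j) ∈ J.sup W := by
        have h1 : (∑ j ∈ J₀ ∩ J, v j) ∈ J.sup W :=
          Submodule.sum_mem _ fun j hj =>
            (Finset.le_sup (Finset.mem_inter.mp hj).2 : W j ≤ J.sup W)
              (hvmem j (Finset.mem_inter.mp hj).1)
        have hsum : (∑ j ∈ J₀ ∩ J, v j) + (∑ j ∈ S, v j) = f := by
          rw [hf]; exact Finset.sum_inter_add_sum_sdiff _ _ _
        have hb : (∑ j ∈ S, v j) = f - (∑ j ∈ J₀ ∩ J, v j) := by
          rw [← hsum]; abel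
        rw [hb, heq]
        exact Submodule.sub_mem _ (hPmem J) h1
      have hb0 : (∑ j ∈ S, v j) = 0 :=
        key S J Finset.sdiff_disjoint hScard hJ _ hbS hbJ
      obtain ⟨j, hjJ₀, hjJ⟩ := Finset.not_subset.mp hsub
      have hjS : j ∈ S := Finset.mem_sdiff.mpr ⟨hjJ₀, hjJ⟩
      have hvj : v j = -∑ i ∈ S.erase j, v i := by
        have hadd : v j + ∑ i ∈ S.erase j, v i = ∑ i ∈ S, v i :=
          Finset.add_sum_erase S v hjS
        rw [hb0] at hadd
        exact eq_neg_of_add_eq_zero_left hadd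
      have h1 : v j ∈ ({j} : Finset (Fin q)).sup W := by
        rw [Finset.sup_singleton]; exact hvmem j hjJ₀
      have h2 : v j ∈ (S.erase j).sup W := by
        rw [hvj]
        exact Submodule.neg_mem _ (Submodule.sum_mem _ fun i hi =>
          (Finset.le_sup hi : W i ≤ (S.erase j).sup W)
            (hvmem i (Finset.mem_sdiff.mp (Finset.mem_of_mem_erase hi)).1))
      have hcard1 : ({j} : Finset (Fin q)).card ≤ qstar := by
        rw [Finset.card_singleton]; exact hqstar
      have hcard2 : (S.erase j).card ≤ qstar :=
        le_trans (Finset.card_erase_le) hScard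
      have hdisj : Disjoint ({j} : Finset (Fin q)) (S.erase j) :=
        Finset.disjoint_singleton_left.mpr (Finset.notMem_erase j S)
      exact hvne j hjJ₀ (key _ _ hdisj hcard1 hcard2 _ h1 h2)
    have horth : ⟪P J, f - P J⟫ = (0:ℝ) :=
      (Submodule.mem_orthogonal _ _).mp (hPorth J) (P J) (hPmem J)
    have hpy : ‖f‖ ^ 2 = ‖P J‖ ^ 2 + ‖f - P J‖ ^ 2 := by
      have hdecomp : f = P J + (f - P J) := by abel
      calc ‖f‖ ^ 2 = ‖P J + (f - P J)‖ ^ 2 := by rw [← hdecomp]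
        _ = ‖P J‖ ^ 2 + 2 * ⟪P J, f - P J⟫ + ‖f - P J‖ ^ 2 :=
            norm_add_sq_real _ _
        _ = ‖P J‖ ^ 2 + ‖f - P J‖ ^ 2 := by rw [horth]; ring
    have hpos : 0 < ‖f - P J‖ := norm_pos_iff.mpr (sub_ne_zero.mpr hne)
    rw [hPJ₀]
    nlinarith [mul_pos hpos hpos]
  refine ⟨part1, fun Jstar hJs hmax => ?_⟩
  by_contra hns
  have h1 := part1 Jstar hJs hns
  have h2 := hmax J₀ hJ₀
  linarith
end

section
/- Let d be a positive integer and let X₁, …, X_d be independent standard Gaussian random variables (mean 0, variance 1) on a probability space. Let S = ∑_{i=1}^d X_i². Then for all x ≥ 0: P( S − d ≥ x ) ≤ exp( −x² / (2(2d + 2x)) ), and P( S − d ≤ −x ) ≤ exp( −x² / (4d) ). -/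
open MeasureTheory ProbabilityTheory

section
open Real
open scoped NNReal ENNReal

section Calculus

lemma lm_mono {f f' : ℝ → ℝ}
    (hder : ∀ y ∈ Set.Ici (0:ℝ), HasDerivAt f (f' y) y)
    (hpos : ∀ y ∈ Set.Ici (0:ℝ), 0 ≤ f' y) {x : ℝ} (hx : 0 ≤ x) : f 0 ≤ f x := by
  have hmono := monotoneOn_of_deriv_nonneg (convex_Ici (0:ℝ))
    (fun y hy => (hder y hy).continuousAt.continuousWithinAt)
    (fun y hy => (hder y (interior_subset hy)).differentiableAt.differentiableWithinAt)
    (fun y hy => by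
      rw [(hder y (interior_subset hy)).deriv]
      exact hpos y (interior_subset hy))
  exact hmono Set.self_mem_Ici hx hx

lemma lm_log_upper {s : ℝ} (hs : 0 ≤ s) :
    Real.log (1 + s) ≤ s - s ^ 2 / (2 * (1 + s)) := by
  have key : ∀ y ∈ Set.Ici (0:ℝ),
      HasDerivAt (fun u => u - u ^ 2 / (2 * (1 + u)) - Real.log (1 + u))
        (y ^ 2 / (2 * (1 + y) ^ 2)) y := by
    intro y hy
    have hy0 : (0:ℝ) ≤ y := hy
    have h1 : (0:ℝ) < 1 + y := by linarith
    have hA : HasDerivAt (fun u : ℝ => u ^ 2 / (2 * (1 + u)))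
        ((2 * y * (2 * (1 + y)) - y ^ 2 * 2) / (2 * (1 + y)) ^ 2) y := by
      have hnum : HasDerivAt (fun u : ℝ => u ^ 2) (2 * y) y := by
        simpa using hasDerivAt_pow 2 y
      have hden : HasDerivAt (fun u : ℝ => 2 * (1 + u)) 2 y := by
        simpa using ((hasDerivAt_id y).const_add (1:ℝ)).const_mul (2:ℝ)
      exact hnum.div hden (by positivity)
    have hlog : HasDerivAt (fun u : ℝ => Real.log (1 + u)) (1 / (1 + y)) y := by
      have := ((hasDerivAt_id y).const_add (1:ℝ)).log h1.ne'
      simpa using this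
    have := ((hasDerivAt_id y).sub hA).sub hlog
    refine this.congr_deriv ?_
    field_simp
    ring
  have h := lm_mono key (fun y hy => by
    have h1 : (0:ℝ) < 1 + y := by have := Set.mem_Ici.mp hy; linarith
    positivity) hs
  simp only [add_zero, Real.log_one] at h
  norm_num at h
  linarith

lemma lm_log_lower {s : ℝ} (hs : 0 ≤ s) :
    s - s ^ 2 / 2 ≤ Real.log (1 + s) := by
  have key : ∀ y ∈ Set.Ici (0:ℝ),
      HasDerivAt (fun u => Real.log (1 + u) - (u - u ^ 2 / 2))
        (y ^ 2 / (1 + y)) y := by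
    intro y hy
    have hy0 : (0:ℝ) ≤ y := hy
    have h1 : (0:ℝ) < 1 + y := by linarith
    have hlog : HasDerivAt (fun u : ℝ => Real.log (1 + u)) (1 / (1 + y)) y := by
      have := ((hasDerivAt_id y).const_add (1:ℝ)).log h1.ne'
      simpa using this
    have hA : HasDerivAt (fun u : ℝ => u - u ^ 2 / 2) (1 - y) y := by
      have hnum : HasDerivAt (fun u : ℝ => u ^ 2) (2 * y) y := by
        simpa using hasDerivAt_pow 2 y
      have := (hasDerivAt_id y).sub (hnum.div_const 2)
      refine this.congr_deriv ?_; ring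
    have := hlog.sub hA
    refine this.congr_deriv ?_
    field_simp
    ring
  have h := lm_mono key (fun y hy => by
    have h1 : (0:ℝ) < 1 + y := by have := Set.mem_Ici.mp hy; linarith
    positivity) hs
  norm_num at h
  linarith

end Calculus

section Gaussian

lemma lm_pdf_eq (y : ℝ) :
    gaussianPDFReal 0 1 y = (Real.sqrt (2 * π))⁻¹ * Real.exp (-(y ^ 2) / 2) := by
  simp [gaussianPDFReal]

lemma lm_toNNReal_meas : Measurable fun y => Real.toNNReal (gaussianPDFReal 0 1 y) :=
  (measurable_gaussianPDFReal 0 1).real_toNNReal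

lemma lm_pdf_fun_eq :
    (gaussianPDF 0 1) = fun y => ((Real.toNNReal (gaussianPDFReal 0 1 y) : ℝ≥0) : ℝ≥0∞) := by
  funext y; rfl

lemma lm_gauss_density_rw (g : ℝ → ℝ) :
    ∫ y, g y ∂(gaussianReal 0 1) = ∫ y, gaussianPDFReal 0 1 y * g y := by
  rw [gaussianReal_of_var_ne_zero _ one_ne_zero, lm_pdf_fun_eq,
    integral_withDensity_eq_integral_smul lm_toNNReal_meas]
  congr 1
  funext y
  simp [NNReal.smul_def, Real.coe_toNNReal _ (gaussianPDFReal_nonneg 0 1 y)]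

lemma lm_integrand_eq {t : ℝ} (y : ℝ) :
    gaussianPDFReal 0 1 y * Real.exp (t * y ^ 2)
      = (Real.sqrt (2 * π))⁻¹ * Real.exp (-(1/2 - t) * y ^ 2) := by
  rw [lm_pdf_eq, mul_assoc, ← Real.exp_add]
  congr 2
  ring

lemma lm_gauss_integrable {t : ℝ} (ht : t < 1/2) :
    Integrable (fun y => Real.exp (t * y ^ 2)) (gaussianReal 0 1) := by
  rw [gaussianReal_of_var_ne_zero _ one_ne_zero, lm_pdf_fun_eq,
    integrable_withDensity_iff_integrable_smul lm_toNNReal_meas]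
  have : (fun y => Real.toNNReal (gaussianPDFReal 0 1 y) • Real.exp (t * y ^ 2))
      = fun y => (Real.sqrt (2 * π))⁻¹ * Real.exp (-(1/2 - t) * y ^ 2) := by
    funext y
    rw [NNReal.smul_def, smul_eq_mul, Real.coe_toNNReal _ (gaussianPDFReal_nonneg 0 1 y)]
    exact lm_integrand_eq y
  rw [this]
  exact (integrable_exp_neg_mul_sq (by linarith)).const_mul _

lemma lm_gauss_mgf {t : ℝ} (ht : t < 1/2) :
    ∫ y, Real.exp (t * y ^ 2) ∂(gaussianReal 0 1) = (Real.sqrt (1 - 2 * t))⁻¹ := by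
  rw [lm_gauss_density_rw]
  have h1 : (fun y => gaussianPDFReal 0 1 y * Real.exp (t * y ^ 2))
      = fun y => (Real.sqrt (2 * π))⁻¹ * Real.exp (-(1/2 - t) * y ^ 2) :=
    funext fun y => lm_integrand_eq y
  rw [h1, integral_const_mul, integral_gaussian]
  have hb : (0:ℝ) < 1 - 2 * t := by linarith
  have hπ : (0:ℝ) < 2 * π := by positivity
  have h2 : π / (1/2 - t) = (2 * π) / (1 - 2 * t) := by
    rw [div_eq_div_iff (by linarith) (by linarith)]; ring
  rw [h2, Real.sqrt_div hπ.le, div_eq_mul_inv, ← mul_assoc,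
    inv_mul_cancel₀ (Real.sqrt_ne_zero'.mpr hπ), one_mul]

end Gaussian

section Tail

variable {Ω : Type*} [MeasureSpace Ω] [IsProbabilityMeasure (ℙ : Measure Ω)]
    {d : ℕ} {X : Fin d → Ω → ℝ}

lemma lm_int_aux (hmeas : ∀ i, Measurable (X i))
    (hgauss : ∀ i, Measure.map (X i) ℙ = gaussianReal 0 1)
    {t : ℝ} (ht : t < 1/2) (i : Fin d) :
    Integrable (fun ω => Real.exp (t * (X i ω) ^ 2)) ℙ := by
  have hg : AEStronglyMeasurable (fun y => Real.exp (t * y ^ 2)) (Measure.map (X i) ℙ) :=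
    (Real.measurable_exp.comp ((measurable_id.pow_const 2).const_mul t)).aestronglyMeasurable
  have h1 : Integrable (fun y => Real.exp (t * y ^ 2)) (Measure.map (X i) ℙ) := by
    rw [hgauss i]; exact lm_gauss_integrable ht
  exact (integrable_map_measure hg (hmeas i).aemeasurable).mp h1

lemma lm_mgf_aux (hmeas : ∀ i, Measurable (X i))
    (hgauss : ∀ i, Measure.map (X i) ℙ = gaussianReal 0 1)
    {t : ℝ} (ht : t < 1/2) (i : Fin d) :
    mgf (fun ω => (X i ω) ^ 2) ℙ t = (Real.sqrt (1 - 2 * t))⁻¹ := by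
  have hg : AEStronglyMeasurable (fun y => Real.exp (t * y ^ 2)) (Measure.map (X i) ℙ) :=
    (Real.measurable_exp.comp ((measurable_id.pow_const 2).const_mul t)).aestronglyMeasurable
  have h2 : mgf (fun ω => (X i ω) ^ 2) ℙ t = ∫ y, Real.exp (t * y ^ 2) ∂(Measure.map (X i) ℙ) :=
    (integral_map (hmeas i).aemeasurable hg).symm
  rw [h2, hgauss i]
  exact lm_gauss_mgf ht

lemma lm_tail_up (hmeas : ∀ i, Measurable (X i))
    (hindep : iIndepFun X ℙ)
    (hgauss : ∀ i, Measure.map (X i) ℙ = gaussianReal 0 1)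
    {t : ℝ} (ε : ℝ) (ht0 : 0 ≤ t) (ht : t < 1/2) :
    (ℙ {ω | ε ≤ ∑ i, (X i ω) ^ 2}).toReal
      ≤ Real.exp (-t * ε) * ((Real.sqrt (1 - 2 * t))⁻¹) ^ d := by
  classical
  set Y : Fin d → Ω → ℝ := fun i => (fun v => v ^ 2) ∘ X i with hY
  have hYmeas : ∀ i, Measurable (Y i) := fun i => (measurable_id.pow_const 2).comp (hmeas i)
  have hYindep : iIndepFun Y ℙ :=
    hindep.comp (fun _ v => v ^ 2) (fun _ => measurable_id.pow_const 2)
  have hint : ∀ i ∈ Finset.univ, Integrable (fun ω => Real.exp (t * Y i ω)) ℙ :=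
    fun i _ => lm_int_aux hmeas hgauss ht i
  have hsumint : Integrable (fun ω => Real.exp (t * (∑ i, Y i) ω)) ℙ :=
    hYindep.integrable_exp_mul_sum hYmeas hint
  have hset : {ω | ε ≤ ∑ i, (X i ω) ^ 2} = {ω | ε ≤ (∑ i, Y i) ω} := by
    ext ω; simp [Finset.sum_apply, hY]
  rw [hset]
  calc (ℙ {ω | ε ≤ (∑ i, Y i) ω}).toReal
      ≤ Real.exp (-t * ε) * mgf (∑ i, Y i) ℙ t :=
        measure_ge_le_exp_mul_mgf ε ht0 hsumint
    _ = Real.exp (-t * ε) * ((Real.sqrt (1 - 2 * t))⁻¹) ^ d := by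
        rw [hYindep.mgf_sum hYmeas]
        congr 1
        calc ∏ i : Fin d, mgf (Y i) ℙ t
            = ∏ _i : Fin d, (Real.sqrt (1 - 2 * t))⁻¹ :=
              Finset.prod_congr rfl fun i _ => lm_mgf_aux hmeas hgauss ht i
          _ = ((Real.sqrt (1 - 2 * t))⁻¹) ^ d := by
              rw [Finset.prod_const, Finset.card_univ, Fintype.card_fin]

lemma lm_tail_low (hmeas : ∀ i, Measurable (X i))
    (hindep : iIndepFun X ℙ)
    (hgauss : ∀ i, Measure.map (X i) ℙ = gaussianReal 0 1)
    {t : ℝ} (ε : ℝ) (ht0 : 0 ≤ t) :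
    (ℙ {ω | ε ≤ -∑ i, (X i ω) ^ 2}).toReal
      ≤ Real.exp (-t * ε) * ((Real.sqrt (1 + 2 * t))⁻¹) ^ d := by
  classical
  have hmt : -t < 1/2 := by linarith
  set Y : Fin d → Ω → ℝ := fun i => (fun v => v ^ 2) ∘ X i with hY
  have hYmeas : ∀ i, Measurable (Y i) := fun i => (measurable_id.pow_const 2).comp (hmeas i)
  have hYindep : iIndepFun Y ℙ :=
    hindep.comp (fun _ v => v ^ 2) (fun _ => measurable_id.pow_const 2)
  have hint : ∀ i ∈ Finset.univ, Integrable (fun ω => Real.exp ((-t) * Y i ω)) ℙ :=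
    fun i _ => lm_int_aux hmeas hgauss hmt i
  have hsumint : Integrable (fun ω => Real.exp ((-t) * (∑ i, Y i) ω)) ℙ :=
    hYindep.integrable_exp_mul_sum hYmeas hint
  have hZint : Integrable (fun ω => Real.exp (t * (-(∑ i, Y i)) ω)) ℙ := by
    have : (fun ω => Real.exp (t * (-(∑ i, Y i)) ω))
        = fun ω => Real.exp ((-t) * (∑ i, Y i) ω) := by
      funext ω; simp [Pi.neg_apply]
    rw [this]; exact hsumint
  have hset : {ω | ε ≤ -∑ i, (X i ω) ^ 2} = {ω | ε ≤ (-(∑ i, Y i)) ω} := by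
    ext ω; simp [Finset.sum_apply, hY]
  rw [hset]
  calc (ℙ {ω | ε ≤ (-(∑ i, Y i)) ω}).toReal
      ≤ Real.exp (-t * ε) * mgf (-(∑ i, Y i)) ℙ t :=
        measure_ge_le_exp_mul_mgf ε ht0 hZint
    _ = Real.exp (-t * ε) * ((Real.sqrt (1 + 2 * t))⁻¹) ^ d := by
        rw [mgf_neg, hYindep.mgf_sum hYmeas]
        congr 1
        have h12 : 1 - 2 * (-t) = 1 + 2 * t := by ring
        calc ∏ i : Fin d, mgf (Y i) ℙ (-t)
            = ∏ _i : Fin d, (Real.sqrt (1 + 2 * t))⁻¹ := by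
              refine Finset.prod_congr rfl fun i _ => ?_
              have h := lm_mgf_aux hmeas hgauss hmt i
              rw [h12] at h
              exact h
          _ = ((Real.sqrt (1 + 2 * t))⁻¹) ^ d := by
              rw [Finset.prod_const, Finset.card_univ, Fintype.card_fin]

end Tail

end
/-- Lemma 8 of the paper (Laurent–Massart chi-square concentration): if
`S = ∑_{i=1}^d Xᵢ²` with `X₁,…,X_d` independent standard Gaussians, then for `x ≥ 0`,
`P(S − d ≥ x) ≤ exp(−x²/(2(2d + 2x)))` and `P(S − d ≤ −x) ≤ exp(−x²/(4d))`. -/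
theorem norms_of_projections_lemma8
    {Ω : Type*} [MeasureSpace Ω] [IsProbabilityMeasure (ℙ : Measure Ω)]
    (d : ℕ) (hd : 0 < d) (X : Fin d → Ω → ℝ)
    (hmeas : ∀ i, Measurable (X i))
    (hindep : iIndepFun X ℙ)
    (hgauss : ∀ i, Measure.map (X i) ℙ = gaussianReal 0 1) :
    ∀ x : ℝ, 0 ≤ x →
      (ℙ {ω | x ≤ (∑ i, (X i ω) ^ 2) - d}).toReal ≤
        Real.exp (-(x ^ 2) / (2 * (2 * d + 2 * x))) ∧
      (ℙ {ω | (∑ i, (X i ω) ^ 2) - d ≤ -x}).toReal ≤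
        Real.exp (-(x ^ 2) / (4 * d)) := by
  intro x hx
  set D : ℝ := (d : ℝ) with hDdef
  have hD : (0:ℝ) < D := by rw [hDdef]; exact_mod_cast hd
  have hDx : (0:ℝ) < D + x := by linarith
  constructor
  · -- upper tail
    set t : ℝ := x / (2 * (D + x)) with htdef
    have ht0 : 0 ≤ t := by positivity
    have ht : t < 1/2 := by
      rw [htdef, div_lt_iff₀ (by positivity)]
      nlinarith
    have hset : {ω | x ≤ (∑ i, (X i ω) ^ 2) - (d:ℝ)} = {ω | D + x ≤ ∑ i, (X i ω) ^ 2} := by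
      ext ω; simp only [Set.mem_setOf_eq, hDdef]
      constructor <;> intro h <;> linarith
    rw [hset]
    refine (lm_tail_up hmeas hindep hgauss (D + x) ht0 ht).trans ?_
    -- arithmetic
    have ha : 1 - 2 * t = D / (D + x) := by
      rw [htdef]; field_simp; ring
    have hapos : (0:ℝ) < 1 - 2 * t := by rw [ha]; positivity
    have hpow : ((Real.sqrt (1 - 2 * t))⁻¹) ^ d
        = Real.exp ((d : ℝ) * -(Real.log (1 - 2 * t) / 2)) := by
      rw [← Real.exp_log (inv_pos.mpr (Real.sqrt_pos.mpr hapos)), Real.log_inv,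
        Real.log_sqrt hapos.le, ← Real.exp_nat_mul]
    rw [hpow, ← Real.exp_add]
    apply Real.exp_le_exp.mpr
    have hainv : 1 - 2 * t = ((1:ℝ) + x / D)⁻¹ := by
      rw [ha]; field_simp
    have hlog : Real.log (1 - 2 * t) = -Real.log (1 + x / D) := by
      rw [hainv, Real.log_inv]
    have hup := lm_log_upper (s := x / D) (by positivity)
    have hE : -t * (D + x) + D * ((x / D - (x / D) ^ 2 / (2 * (1 + x / D))) / 2)
        = -(x ^ 2) / (2 * (2 * D + 2 * x)) := by
      rw [htdef]; field_simp; ring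
    have hcast : ((d:ℝ)) = D := rfl
    rw [hcast, hlog]
    have hmul := mul_le_mul_of_nonneg_left hup (by positivity : (0:ℝ) ≤ D / 2)
    push_cast
    nlinarith [hmul, hE]
  · -- lower tail
    set t : ℝ := x / (2 * D) with htdef
    have ht0 : 0 ≤ t := by positivity
    have hset : {ω | (∑ i, (X i ω) ^ 2) - (d:ℝ) ≤ -x} = {ω | x - D ≤ -∑ i, (X i ω) ^ 2} := by
      ext ω; simp only [Set.mem_setOf_eq, hDdef]
      constructor <;> intro h <;> linarith
    rw [hset]
    refine (lm_tail_low hmeas hindep hgauss (x - D) ht0).trans ?_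
    have ha : 1 + 2 * t = 1 + x / D := by
      rw [htdef]; field_simp
    have hapos : (0:ℝ) < 1 + 2 * t := by rw [ha]; positivity
    have hpow : ((Real.sqrt (1 + 2 * t))⁻¹) ^ d
        = Real.exp ((d : ℝ) * -(Real.log (1 + 2 * t) / 2)) := by
      rw [← Real.exp_log (inv_pos.mpr (Real.sqrt_pos.mpr hapos)), Real.log_inv,
        Real.log_sqrt hapos.le, ← Real.exp_nat_mul]
    rw [hpow, ← Real.exp_add]
    apply Real.exp_le_exp.mpr
    have hlow := lm_log_lower (s := x / D) (by positivity)
    have hE : -t * (x - D) + D * (-(x / D - (x / D) ^ 2 / 2) / 2)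
        = -(x ^ 2) / (4 * D) := by
      rw [htdef]; field_simp; ring
    have hcast : ((d:ℝ)) = D := rfl
    rw [hcast, ha]
    have hmul := mul_le_mul_of_nonneg_left hlow (by positivity : (0:ℝ) ≤ D / 2)
    nlinarith [hmul, hE]
end

section
/- Let V be a real vector space equipped with a seminorm N, let ‖·‖ : V → ℝ be a nonnegative function on V, let J be a finite index set, and let g_j ∈ V and a_j ≥ 0 for j ∈ J. Let ε ∈ [0,1). Assume: (i) N(g_j)² ≤ a_j ‖g_j‖² for every j ∈ J; (ii) ‖∑_{j∈J} g_j‖² ≥ (1 − ε) ∑_{j∈J} ‖g_j‖². Then N(∑_{j∈J} g_j)² ≤ ((∑_{j∈J} a_j) / (1 − ε)) · ‖∑_{j∈J} g_j‖². -/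
/-- The abstract form of inequality (3.2) of Appendix E of the paper: for a seminorm
`N` (playing the role of the sup-norm) and a nonnegative function `nrm` (playing the
role of the L²-norm), if `N(g_j)² ≤ a_j nrm(g_j)²` for `j ∈ J` and
`nrm(∑_{j∈J} g_j)² ≥ (1 − ε) ∑_{j∈J} nrm(g_j)²`, then
`N(∑_{j∈J} g_j)² ≤ ((∑_{j∈J} a_j)/(1 − ε)) nrm(∑_{j∈J} g_j)²`. -/
theorem norms_of_projections_supnorm_transfer
    {V : Type*} [AddCommGroup V] [Module ℝ V]
    (N : Seminorm ℝ V) (nrm : V → ℝ) (hnrm : ∀ g, 0 ≤ nrm g)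
    {ι : Type*} (J : Finset ι) (g : ι → V) (a : ι → ℝ) (ha : ∀ j ∈ J, 0 ≤ a j)
    (ε : ℝ) (hε0 : 0 ≤ ε) (hε1 : ε < 1)
    (h1 : ∀ j ∈ J, (N (g j)) ^ 2 ≤ a j * (nrm (g j)) ^ 2)
    (h2 : (nrm (∑ j ∈ J, g j)) ^ 2 ≥ (1 - ε) * ∑ j ∈ J, (nrm (g j)) ^ 2) :
    (N (∑ j ∈ J, g j)) ^ 2 ≤
      ((∑ j ∈ J, a j) / (1 - ε)) * (nrm (∑ j ∈ J, g j)) ^ 2 := by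
  have hεpos : (0:ℝ) < 1 - ε := by linarith
  -- Step 1: N(g j) ≤ √(a j) * nrm (g j)
  have step1 : ∀ j ∈ J, N (g j) ≤ Real.sqrt (a j) * nrm (g j) := by
    intro j hj
    have hnn : 0 ≤ Real.sqrt (a j) * nrm (g j) :=
      mul_nonneg (Real.sqrt_nonneg _) (hnrm _)
    have hsq : (N (g j))^2 ≤ (Real.sqrt (a j) * nrm (g j))^2 := by
      rw [mul_pow, Real.sq_sqrt (ha j hj)]; exact h1 j hj
    calc N (g j) = Real.sqrt ((N (g j))^2) := (Real.sqrt_sq (apply_nonneg N _)).symm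
      _ ≤ Real.sqrt ((Real.sqrt (a j) * nrm (g j))^2) := Real.sqrt_le_sqrt hsq
      _ = Real.sqrt (a j) * nrm (g j) := Real.sqrt_sq hnn
  -- Step 2: N(∑ g) ≤ ∑ √(a j) * nrm (g j)
  have step2 : N (∑ j ∈ J, g j) ≤ ∑ j ∈ J, Real.sqrt (a j) * nrm (g j) :=
    (Finset.le_sum_of_subadditive N (map_zero N).le (map_add_le_add N) J g).trans (Finset.sum_le_sum step1)
  -- Cauchy–Schwarz
  have cs : (∑ j ∈ J, Real.sqrt (a j) * nrm (g j))^2 ≤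
      (∑ j ∈ J, (Real.sqrt (a j))^2) * ∑ j ∈ J, (nrm (g j))^2 :=
    Finset.sum_mul_sq_le_sq_mul_sq J _ _
  have hsum : ∑ j ∈ J, (Real.sqrt (a j))^2 = ∑ j ∈ J, a j :=
    Finset.sum_congr rfl fun j hj => Real.sq_sqrt (ha j hj)
  have hS : (N (∑ j ∈ J, g j))^2 ≤ (∑ j ∈ J, a j) * ∑ j ∈ J, (nrm (g j))^2 := by
    calc (N (∑ j ∈ J, g j))^2 ≤ (∑ j ∈ J, Real.sqrt (a j) * nrm (g j))^2 :=
          pow_le_pow_left₀ (apply_nonneg N _) step2 2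
      _ ≤ (∑ j ∈ J, a j) * ∑ j ∈ J, (nrm (g j))^2 := by rw [← hsum]; exact cs
  have hanonneg : 0 ≤ ∑ j ∈ J, a j := Finset.sum_nonneg ha
  have h3 : ∑ j ∈ J, (nrm (g j))^2 ≤ (nrm (∑ j ∈ J, g j))^2 / (1 - ε) :=
    (le_div_iff₀ hεpos).mpr (by linarith [h2])
  calc (N (∑ j ∈ J, g j))^2 ≤ (∑ j ∈ J, a j) * ∑ j ∈ J, (nrm (g j))^2 := hS
    _ ≤ (∑ j ∈ J, a j) * ((nrm (∑ j ∈ J, g j))^2 / (1 - ε)) :=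
        mul_le_mul_of_nonneg_left h3 hanonneg
    _ = ((∑ j ∈ J, a j) / (1 - ε)) * (nrm (∑ j ∈ J, g j))^2 := by ring
end

section
/- Let (S, 𝒮, μ) be a probability space, let n, q, q* be positive integers, and let x¹, …, xⁿ ∈ S. For a bounded measurable function g : S → ℝ set ‖g‖² = ∫ g² dμ and ‖g‖ₙ² = (1/n) ∑_{i=1}^n g(xⁱ)². Let V₁, …, V_q be finite-dimensional linear subspaces of the space of bounded measurable functions S → ℝ, and for J ⊆ {1,…,q} write V_J = ∑_{j∈J} V_j. Equip ℝⁿ with the inner product ⟨u, w⟩ₙ = (1/n) ∑_{i=1}^n u_i w_i and let Π̂_J denote the orthogonal projection of ℝⁿ onto the subspace {(g(x¹),…,g(xⁿ)) : g ∈ V_J}. Let ρ ∈ [0,1) and δ ∈ (0,1), let J₀, J ⊆ {1,…,q} with |J₀| ≤ q*, |J| ≤ q* and J₀ \ J ≠ ∅. Assume: (i) for all disjoint J₁, J₂ ⊆ {1,…,q} with |J₁|, |J₂| ≤ q* and all g₁ ∈ V_{J₁}, g₂ ∈ V_{J₂}, ∫ g₁ g₂ dμ ≤ ρ ‖g₁‖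 ‖g₂‖; (ii) (1 − δ)‖g‖² ≤ ‖g‖ₙ² ≤ (1 + δ)‖g‖² for all g ∈ V_{J ∪ J₀}. Let v_j ∈ V_j for j ∈ J₀, let v = ∑_{j∈J₀} v_j, and let v̂ = (v(x¹),…,v(xⁿ)) ∈ ℝⁿ. Then ‖Π̂_{J₀} v̂‖ₙ² − ‖Π̂_J v̂‖ₙ² = ‖v̂ − Π̂_J v̂‖ₙ² ≥ ((1 − δ)/(1 + δ)) (1 − ρ²) ‖∑_{j∈J₀\J} v_j‖ₙ², where ‖u‖ₙ² = (1/n)∑_{i=1}^n u_i² for u ∈ ℝⁿ. -/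
open MeasureTheory

/-- The submodule of bounded measurable real functions on `S`. -/
def bddMeasSubmodule (S : Type*) [MeasurableSpace S] : Submodule ℝ (S → ℝ) where
  carrier := {g | Measurable g ∧ ∃ M : ℝ, ∀ s : S, |g s| ≤ M}
  add_mem' := by
    rintro f g ⟨hf, Mf, hMf⟩ ⟨hg, Mg, hMg⟩
    exact ⟨hf.add hg, Mf + Mg, fun s =>
      (abs_add_le _ _).trans (add_le_add (hMf s) (hMg s))⟩
  zero_mem' := ⟨measurable_const, 0, by simp⟩
  smul_mem' := by
    rintro c f ⟨hf, M, hM⟩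
    refine ⟨hf.const_smul c, |c| * M, fun s => ?_⟩
    rw [Pi.smul_apply, smul_eq_mul, abs_mul]
    exact mul_le_mul_of_nonneg_left (hM s) (abs_nonneg c)

lemma integrable_mul_of_bdd {S : Type*} [MeasurableSpace S] (μ : Measure S)
    [IsFiniteMeasure μ] {f g : S → ℝ} (hf : Measurable f) (Mf : ℝ)
    (hMf : ∀ s, |f s| ≤ Mf) (hg : Measurable g) (Mg : ℝ) (hMg : ∀ s, |g s| ≤ Mg) :
    Integrable (fun s => f s * g s) μ := by
  refine Integrable.mono' (integrable_const (Mf * Mg))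
    ((hf.mul hg).aestronglyMeasurable) ?_
  filter_upwards with s
  rw [Real.norm_eq_abs, abs_mul]
  exact mul_le_mul (hMf s) (hMg s) (abs_nonneg _)
    (le_trans (abs_nonneg (f s)) (hMf s))

set_option maxHeartbeats 1600000 in
/-- Proposition 2 of the paper (finite-sample empirical version of the population
projection-gap inequality, on the event `ℰ_{δ,J∪J₀}`). The empirical projections
`Π̂_J` onto the evaluation subspaces `{(g(x¹),…,g(xⁿ)) : g ∈ V_J}` of `ℝⁿ` with
inner product `⟨u,w⟩ₙ = (1/n)∑ᵢ uᵢwᵢ` are encoded via their characteristic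
property (membership plus orthogonality). Under the minimal-angle condition for
the population norm and the event `(1−δ)‖g‖² ≤ ‖g‖ₙ² ≤ (1+δ)‖g‖²` on `V_{J∪J₀}`,
for `v = ∑_{j∈J₀} v_j` with `v_j ∈ V_j`,
`‖Π̂_{J₀}v̂‖ₙ² − ‖Π̂_J v̂‖ₙ² = ‖v̂ − Π̂_J v̂‖ₙ² ≥ ((1−δ)/(1+δ))(1−ρ²)‖∑_{j∈J₀\J} v_j‖ₙ²`. -/
theorem norms_of_projections_proposition2
    {S : Type*} [MeasurableSpace S] (μ : Measure S) [IsProbabilityMeasure μ]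
    (n q qstar : ℕ) (hn : 0 < n) (hq : 0 < q) (hqstar : 0 < qstar)
    (xs : Fin n → S)
    (V : Fin q → Submodule ℝ (S → ℝ))
    (hmb : ∀ j, ∀ g ∈ V j, Measurable g ∧ ∃ M : ℝ, ∀ s : S, |g s| ≤ M)
    (hfd : ∀ j, FiniteDimensional ℝ (V j))
    (ρ δ : ℝ) (hρ0 : 0 ≤ ρ) (hρ1 : ρ < 1) (hδ0 : 0 < δ) (hδ1 : δ < 1)
    (J₀ J : Finset (Fin q)) (hJ₀c : J₀.card ≤ qstar) (hJc : J.card ≤ qstar)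
    (hmiss : (J₀ \ J).Nonempty)
    (hangle : ∀ J₁ J₂ : Finset (Fin q), Disjoint J₁ J₂ →
      J₁.card ≤ qstar → J₂.card ≤ qstar →
      ∀ g₁ ∈ J₁.sup V, ∀ g₂ ∈ J₂.sup V,
        ∫ s, g₁ s * g₂ s ∂μ ≤
          ρ * Real.sqrt (∫ s, (g₁ s) ^ 2 ∂μ) * Real.sqrt (∫ s, (g₂ s) ^ 2 ∂μ))
    (hemp : ∀ g ∈ (J ∪ J₀).sup V,
      (1 - δ) * ∫ s, (g s) ^ 2 ∂μ ≤ (1 / n : ℝ) * ∑ i, (g (xs i)) ^ 2 ∧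
      (1 / n : ℝ) * ∑ i, (g (xs i)) ^ 2 ≤ (1 + δ) * ∫ s, (g s) ^ 2 ∂μ)
    (v : Fin q → (S → ℝ)) (hv : ∀ j ∈ J₀, v j ∈ V j)
    (vhat : Fin n → ℝ) (hvhat : vhat = fun i => (∑ j ∈ J₀, v j) (xs i))
    (pJ₀ pJ : Fin n → ℝ)
    (hpJ₀mem : ∃ g ∈ J₀.sup V, pJ₀ = fun i => g (xs i))
    (hpJ₀orth : ∀ g ∈ J₀.sup V, (1 / n : ℝ) * ∑ i, (vhat i - pJ₀ i) * g (xs i) = 0)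
    (hpJmem : ∃ g ∈ J.sup V, pJ = fun i => g (xs i))
    (hpJorth : ∀ g ∈ J.sup V, (1 / n : ℝ) * ∑ i, (vhat i - pJ i) * g (xs i) = 0) :
    ((1 / n : ℝ) * ∑ i, (pJ₀ i) ^ 2) - ((1 / n : ℝ) * ∑ i, (pJ i) ^ 2) =
      (1 / n : ℝ) * ∑ i, (vhat i - pJ i) ^ 2 ∧
    (1 / n : ℝ) * ∑ i, (vhat i - pJ i) ^ 2 ≥
      ((1 - δ) / (1 + δ)) * (1 - ρ ^ 2) *
        ((1 / n : ℝ) * ∑ i, ((∑ j ∈ J₀ \ J, v j) (xs i)) ^ 2) := by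
  have hn' : (0 : ℝ) < n := by exact_mod_cast hn
  have hninv : (0 : ℝ) < 1 / n := by positivity
  obtain ⟨g₀, hg₀mem, hg₀⟩ := hpJ₀mem
  obtain ⟨gJ, hgJmem, hgJ⟩ := hpJmem
  -- the full sum `v` belongs to the span of `J₀`
  have hvmem : (∑ j ∈ J₀, v j) ∈ J₀.sup V :=
    Submodule.sum_mem _ (fun j hj => (Finset.le_sup hj : V j ≤ J₀.sup V) (hv j hj))
  -- Part 1 preliminary: pJ₀ = vhat
  have hpJ₀eq : ∀ i, pJ₀ i = vhat i := by
    have hmem : (∑ j ∈ J₀, v j) - g₀ ∈ J₀.sup V := sub_mem hvmem hg₀mem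
    have horth := hpJ₀orth _ hmem
    have hzero : ∑ i, (vhat i - pJ₀ i) ^ 2 = 0 := by
      have : (1 / n : ℝ) * ∑ i, (vhat i - pJ₀ i) ^ 2 = 0 := by
        rw [← horth]
        congr 1
        refine Finset.sum_congr rfl fun i _ => ?_
        have h1 : ((∑ j ∈ J₀, v j) - g₀) (xs i) = vhat i - pJ₀ i := by
          simp [hvhat, hg₀]
        rw [h1]; ring
      have := mul_left_cancel₀ (ne_of_gt hninv) (by rw [this, mul_zero] :
        (1 / n : ℝ) * ∑ i, (vhat i - pJ₀ i) ^ 2 = (1 / n : ℝ) * 0)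
      exact this
    intro i
    have hi : (vhat i - pJ₀ i) ^ 2 = 0 := by
      have := (Finset.sum_eq_zero_iff_of_nonneg
        (fun i _ => sq_nonneg (vhat i - pJ₀ i))).mp hzero i (Finset.mem_univ i)
      exact this
    have := pow_eq_zero_iff (n := 2) (by norm_num) |>.mp hi
    linarith [sub_eq_zero.mp this]
  -- cross term orthogonality for J
  have hcross : ∑ i, (vhat i - pJ i) * pJ i = 0 := by
    have horth := hpJorth gJ hgJmem
    have : (1 / n : ℝ) * ∑ i, (vhat i - pJ i) * pJ i = 0 := by
      rw [← horth]
      congr 1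
      exact Finset.sum_congr rfl fun i _ => by rw [hgJ]
    exact mul_left_cancel₀ (ne_of_gt hninv)
      (by rw [this, mul_zero] : _ = (1 / n : ℝ) * 0)
  -- Part 1
  have part1 : ((1 / n : ℝ) * ∑ i, (pJ₀ i) ^ 2) - ((1 / n : ℝ) * ∑ i, (pJ i) ^ 2) =
      (1 / n : ℝ) * ∑ i, (vhat i - pJ i) ^ 2 := by
    have hsum : ∑ i, (vhat i) ^ 2 =
        ∑ i, ((vhat i - pJ i) ^ 2 + 2 * ((vhat i - pJ i) * pJ i) + (pJ i) ^ 2) :=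
      Finset.sum_congr rfl fun i _ => by ring
    rw [Finset.sum_add_distrib, Finset.sum_add_distrib, ← Finset.mul_sum, hcross] at hsum
    have h0 : ∑ i, (pJ₀ i) ^ 2 = ∑ i, (vhat i) ^ 2 :=
      Finset.sum_congr rfl fun i _ => by rw [hpJ₀eq]
    rw [h0]
    have : ∑ i, (vhat i) ^ 2 - ∑ i, (pJ i) ^ 2 = ∑ i, (vhat i - pJ i) ^ 2 := by
      linarith
    rw [← mul_sub, this]
  refine ⟨part1, ?_⟩
  -- Part 2
  set w : S → ℝ := ∑ j ∈ J₀ \ J, v j with hw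
  set u : S → ℝ := ∑ j ∈ J₀ ∩ J, v j with hu
  set h : S → ℝ := gJ - u with hh
  set f : S → ℝ := (∑ j ∈ J₀, v j) - gJ with hf
  have hwmem : w ∈ (J₀ \ J).sup V :=
    Submodule.sum_mem _ (fun j hj => (Finset.le_sup hj : V j ≤ (J₀ \ J).sup V)
      (hv j (Finset.mem_sdiff.mp hj).1))
  have humem : u ∈ J.sup V :=
    Submodule.sum_mem _ (fun j hj =>
      (Finset.le_sup (Finset.mem_inter.mp hj).2 : V j ≤ J.sup V)
        (hv j (Finset.mem_inter.mp hj).1))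
  have hhmem : h ∈ J.sup V := sub_mem hgJmem humem
  have hJsub : J.sup V ≤ (J ∪ J₀).sup V :=
    Finset.sup_mono Finset.subset_union_left
  have hJ₀sub : J₀.sup V ≤ (J ∪ J₀).sup V :=
    Finset.sup_mono Finset.subset_union_right
  have hfmem : f ∈ (J ∪ J₀).sup V := sub_mem (hJ₀sub hvmem) (hJsub hgJmem)
  have hwmem' : w ∈ (J ∪ J₀).sup V :=
    (Finset.sup_mono (fun j hj => Finset.mem_union_right _ (Finset.mem_sdiff.mp hj).1)
      : (J₀ \ J).sup V ≤ (J ∪ J₀).sup V) hwmem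
  -- f = w - h as functions
  have hfeq : ∀ s, f s = w s - h s := by
    intro s
    have hsplit : (∑ j ∈ J₀ ∩ J, v j s) + ∑ j ∈ J₀ \ J, v j s = ∑ j ∈ J₀, v j s :=
      Finset.sum_inter_add_sum_sdiff J₀ J (fun j => v j s)
    simp only [hf, hw, hh, hu, Pi.sub_apply, Finset.sum_apply]
    linarith
  -- measurability / boundedness of members of sups
  have hsupbdd : ∀ (T : Finset (Fin q)), T.sup V ≤ bddMeasSubmodule S := by
    intro T
    refine Finset.sup_le fun j _ => fun g hg => hmb j g hg
  obtain ⟨hwm, Mw, hMw⟩ := hsupbdd _ hwmem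
  obtain ⟨hhm, Mh, hMh⟩ := hsupbdd _ (hhmem : h ∈ J.sup V)
  -- integrability
  have hint_ww : Integrable (fun s => w s * w s) μ :=
    integrable_mul_of_bdd μ hwm Mw hMw hwm Mw hMw
  have hint_wh : Integrable (fun s => w s * h s) μ :=
    integrable_mul_of_bdd μ hwm Mw hMw hhm Mh hMh
  have hint_hh : Integrable (fun s => h s * h s) μ :=
    integrable_mul_of_bdd μ hhm Mh hMh hhm Mh hMh
  have hint_w2 : Integrable (fun s => (w s) ^ 2) μ := by
    simpa [sq] using hint_ww
  have hint_h2 : Integrable (fun s => (h s) ^ 2) μ := by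
    simpa [sq] using hint_hh
  -- expansion of ∫ (w - h)^2
  have hexp : ∫ s, (w s - h s) ^ 2 ∂μ =
      ∫ s, (w s) ^ 2 ∂μ - 2 * ∫ s, w s * h s ∂μ + ∫ s, (h s) ^ 2 ∂μ := by
    have hfun : (fun s => (w s - h s) ^ 2) =
        fun s => ((w s) ^ 2 - 2 * (w s * h s)) + (h s) ^ 2 :=
      funext fun s => by ring
    rw [hfun, integral_add (f := fun s => (w s) ^ 2 - 2 * (w s * h s))
      (g := fun s => (h s) ^ 2) (hint_w2.sub (hint_wh.const_mul 2)) hint_h2,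
      integral_sub (f := fun s => (w s) ^ 2) (g := fun s => 2 * (w s * h s))
        hint_w2 (hint_wh.const_mul 2), integral_const_mul]
  -- minimal angle bound
  have hangleWH := hangle (J₀ \ J) J Finset.sdiff_disjoint
    (le_trans (Finset.card_le_card Finset.sdiff_subset) hJ₀c) hJc w hwmem h hhmem
  set a := Real.sqrt (∫ s, (w s) ^ 2 ∂μ) with ha
  set b := Real.sqrt (∫ s, (h s) ^ 2 ∂μ) with hb
  have hw2nonneg : 0 ≤ ∫ s, (w s) ^ 2 ∂μ := integral_nonneg fun s => sq_nonneg _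
  have hh2nonneg : 0 ≤ ∫ s, (h s) ^ 2 ∂μ := integral_nonneg fun s => sq_nonneg _
  have ha2 : a ^ 2 = ∫ s, (w s) ^ 2 ∂μ := Real.sq_sqrt hw2nonneg
  have hb2 : b ^ 2 = ∫ s, (h s) ^ 2 ∂μ := Real.sq_sqrt hh2nonneg
  have hanonneg : 0 ≤ a := Real.sqrt_nonneg _
  have hbnonneg : 0 ≤ b := Real.sqrt_nonneg _
  -- population key inequality
  have hkey : ∫ s, (w s - h s) ^ 2 ∂μ ≥ (1 - ρ ^ 2) * ∫ s, (w s) ^ 2 ∂μ := by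
    rw [hexp, ← ha2, ← hb2]
    nlinarith [sq_nonneg (ρ * a - b), hangleWH, sq_nonneg a, sq_nonneg b]
  -- relate empirical quantities
  have hLHS : (1 / n : ℝ) * ∑ i, (vhat i - pJ i) ^ 2 =
      (1 / n : ℝ) * ∑ i, (f (xs i)) ^ 2 := by
    congr 1
    refine Finset.sum_congr rfl fun i _ => ?_
    simp [hf, hvhat, hgJ]
  have hempf := (hemp f hfmem).1
  have hempw := (hemp w hwmem').2
  have hIf : ∫ s, (f s) ^ 2 ∂μ = ∫ s, (w s - h s) ^ 2 ∂μ := by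
    congr 1
    exact funext fun s => by rw [hfeq s]
  rw [hLHS]
  -- final combination
  have hWnonneg : 0 ≤ (1 / n : ℝ) * ∑ i, (w (xs i)) ^ 2 := by
    positivity
  have hδ' : (0 : ℝ) < 1 + δ := by linarith
  have hcnonneg : 0 ≤ (1 - δ) / (1 + δ) * (1 - ρ ^ 2) := by
    have h1 : (0:ℝ) ≤ 1 - δ := by linarith
    have h2 : (0:ℝ) ≤ 1 - ρ ^ 2 := by nlinarith
    positivity
  have halg : ∀ c x : ℝ, ((1 - δ) / (1 + δ)) * c * ((1 + δ) * x) = (1 - δ) * (c * x) := by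
    intro c x
    rw [div_mul_eq_mul_div, div_mul_eq_mul_div, div_eq_iff (ne_of_gt hδ')]
    ring
  have hgoalchain : ((1 - δ) / (1 + δ)) * (1 - ρ ^ 2) *
      ((1 / n : ℝ) * ∑ i, (w (xs i)) ^ 2) ≤ (1 / n : ℝ) * ∑ i, (f (xs i)) ^ 2 := by
    calc ((1 - δ) / (1 + δ)) * (1 - ρ ^ 2) * ((1 / n : ℝ) * ∑ i, (w (xs i)) ^ 2)
        ≤ ((1 - δ) / (1 + δ)) * (1 - ρ ^ 2) * ((1 + δ) * ∫ s, (w s) ^ 2 ∂μ) :=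
          mul_le_mul_of_nonneg_left hempw hcnonneg
      _ = (1 - δ) * ((1 - ρ ^ 2) * ∫ s, (w s) ^ 2 ∂μ) := halg _ _
      _ ≤ (1 - δ) * ∫ s, (f s) ^ 2 ∂μ := by
          refine mul_le_mul_of_nonneg_left ?_ (by linarith)
          rw [hIf]; exact hkey
      _ ≤ (1 / n : ℝ) * ∑ i, (f (xs i)) ^ 2 := hempf
  exact hgoalchain
end
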